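/- arXiv:2003.13492 — 5 statements merged into one kernel-verified Lean document; each statement's English description precedes it below -/
import Mathlib

section
/- Let n ≥ 1, and let K, L be integers with K > 2L ≥ 0. Set X = { a ∈ ℤⁿ : L ≤ a_i < K − L for i = 1, …, n }. Then for every φ ∈ ℓ²(ℤⁿ): (i) Σ_{b ∈ {0,…,K−1}ⁿ} Σ_{a ∈ X + Kℤⁿ} |φ(a + b)|² = (K − 2L)ⁿ · ‖φ‖², and (ii) consequently there exists b ∈ {0,…,K−1}ⁿ such that Σ_{a ∈ X + Kℤⁿ} |φ(a + b)|² ≥ (1 − 2L/K)ⁿ · ‖φ‖². -/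
open scoped Real

open scoped ENNReal

lemma stmt10_mem_iff {n : ℕ} (K L : ℕ) (hK : 2 * L < K) (w : Fin n → ℤ) :
    (∃ x c : Fin n → ℤ, (∀ i, (L : ℤ) ≤ x i ∧ x i < (K : ℤ) - (L : ℤ)) ∧
      w = fun i => x i + K * c i) ↔
    ∀ i, (L : ℤ) ≤ w i % K ∧ w i % K < (K : ℤ) - L := by
  constructor
  · rintro ⟨x, c, hx, rfl⟩ i
    have h1 : (x i + (K:ℤ) * c i) % K = x i % K := Int.add_mul_emod_self_left ..
    have h2 : x i % K = x i :=
      Int.emod_eq_of_lt (by have := (hx i).1; omega) (by have := (hx i).2; omega)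
    simpa [h1, h2] using hx i
  · intro h
    refine ⟨fun i => w i % K, fun i => w i / K, h, ?_⟩
    funext i
    exact (Int.emod_add_mul_ediv (w i) K).symm

lemma stmt10_coord_sum (K L : ℕ) (hK : 2 * L < K) (z : ℤ) :
    ∑ c : Fin K, (if (L:ℤ) ≤ (z - c) % K ∧ (z - c) % K < (K:ℤ) - L then (1:ℝ) else 0)
      = (K : ℝ) - 2 * L := by
  have hK0 : (0:ℤ) < K := by exact_mod_cast Nat.pos_of_ne_zero (by omega)
  have hmod : ∀ a : ℤ, 0 ≤ a % K ∧ a % K < K := fun a =>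
    ⟨Int.emod_nonneg a (by omega), Int.emod_lt_of_pos a hK0⟩
  -- the involution c ↦ (z - c) % K on Fin K
  have key : ∀ a b : ℤ, (a - b % K) % K = (a - b) % K := by
    intro a b
    conv_rhs => rw [Int.sub_emod]
    rw [Int.sub_emod a (b % K) K, Int.emod_emod_of_dvd b dvd_rfl]
  let σ : Fin K → Fin K := fun c =>
    ⟨((z - (c : ℤ)) % K).toNat, by
      have := hmod (z - (c : ℤ)); omega⟩
  have hcast : ∀ c : Fin K, ((σ c : ℕ) : ℤ) = (z - (c : ℤ)) % K := by
    intro c; simp only [σ]; exact Int.toNat_of_nonneg (hmod _).1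
  have hinv : Function.Involutive σ := by
    intro c
    apply Fin.ext
    have h1 : ((σ (σ c) : ℕ) : ℤ) = ((c : ℕ) : ℤ) := by
      rw [hcast, hcast, key, sub_sub_cancel, Int.emod_eq_of_lt (by positivity) (by exact_mod_cast c.2)]
    exact_mod_cast h1
  have hre : ∑ c : Fin K, (if (L:ℤ) ≤ (z - c) % K ∧ (z - c) % K < (K:ℤ) - L then (1:ℝ) else 0)
      = ∑ r : Fin K, (if (L:ℤ) ≤ ((r:ℕ):ℤ) ∧ ((r:ℕ):ℤ) < (K:ℤ) - L then (1:ℝ) else 0) := by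
    rw [← Function.Bijective.sum_comp hinv.bijective
      (fun r => if (L:ℤ) ≤ ((r:ℕ):ℤ) ∧ ((r:ℕ):ℤ) < (K:ℤ) - L then (1:ℝ) else 0)]
    refine Finset.sum_congr rfl fun c _ => ?_
    rw [hcast c]
  rw [hre]
  have : ∀ r : Fin K, (if (L:ℤ) ≤ ((r:ℕ):ℤ) ∧ ((r:ℕ):ℤ) < (K:ℤ) - L then (1:ℝ) else 0)
      = (if L ≤ (r:ℕ) ∧ (r:ℕ) < K - L then (1:ℝ) else 0) := by
    intro r
    congr 1
    simp only [eq_iff_iff]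
    constructor <;> intro h <;> omega
  simp_rw [this]
  rw [Fin.sum_univ_eq_sum_range (fun m => if L ≤ m ∧ m < K - L then (1:ℝ) else 0)]
  rw [Finset.sum_ite, Finset.sum_const_zero, add_zero]
  have hfil : (Finset.range K).filter (fun m => L ≤ m ∧ m < K - L) = Finset.Ico L (K - L) := by
    ext m; simp only [Finset.mem_filter, Finset.mem_range, Finset.mem_Ico]; omega
  rw [hfil]
  simp only [Finset.sum_const, Nat.card_Ico, nsmul_eq_mul, mul_one]
  have : K - L - L = K - 2 * L := by omega
  rw [this, Nat.cast_sub (by omega)]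
  push_cast; ring

noncomputable section

/-- Box decomposition estimate: with X = {a ∈ ℤⁿ : L ≤ aᵢ < K − L}, for every
φ ∈ ℓ²(ℤⁿ): (i) Σ_{b ∈ {0,…,K−1}ⁿ} Σ_{a ∈ X + Kℤⁿ} |φ(a+b)|² = (K−2L)ⁿ‖φ‖², and
(ii) there is b ∈ {0,…,K−1}ⁿ with Σ_{a ∈ X + Kℤⁿ} |φ(a+b)|² ≥ (1 − 2L/K)ⁿ‖φ‖². -/
theorem stmt_10 (n : ℕ) (hn : 1 ≤ n) (K L : ℕ) (hK : 2 * L < K)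
    (φ : lp (fun _ : Fin n → ℤ => ℂ) 2) :
    (∑ b : Fin n → Fin K,
        ∑' a : {a : Fin n → ℤ | ∃ x c : Fin n → ℤ,
            (∀ i, (L : ℤ) ≤ x i ∧ x i < (K : ℤ) - (L : ℤ)) ∧ a = fun i => x i + K * c i},
          ‖φ ((a : Fin n → ℤ) + fun i => ((b i : ℤ)))‖ ^ 2)
      = ((K : ℝ) - 2 * (L : ℝ)) ^ n * ‖φ‖ ^ 2 ∧
    ∃ b : Fin n → Fin K,
      (1 - 2 * (L : ℝ) / (K : ℝ)) ^ n * ‖φ‖ ^ 2 ≤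
        ∑' a : {a : Fin n → ℤ | ∃ x c : Fin n → ℤ,
            (∀ i, (L : ℤ) ≤ x i ∧ x i < (K : ℤ) - (L : ℤ)) ∧ a = fun i => x i + K * c i},
          ‖φ ((a : Fin n → ℤ) + fun i => ((b i : ℤ)))‖ ^ 2 := by
  classical
  have hK0 : 0 < K := by omega
  set S : Set (Fin n → ℤ) := {a : Fin n → ℤ | ∃ x c : Fin n → ℤ,
      (∀ i, (L : ℤ) ≤ x i ∧ x i < (K : ℤ) - (L : ℤ)) ∧ a = fun i => x i + K * c i} with hS
  set F : (Fin n → ℤ) → ℝ := fun z => ‖φ z‖ ^ 2 with hFdef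
  -- summability and norm identity
  have hp : (0:ℝ) < (2 : ℝ≥0∞).toReal := by norm_num
  have hF : Summable F := by
    have h := (memℓp_gen_iff hp).1 (lp.memℓp φ)
    have h2 : (fun i : Fin n → ℤ => ‖φ i‖ ^ (2 : ℝ≥0∞).toReal) = F := by
      funext i
      rw [show (2 : ℝ≥0∞).toReal = ((2:ℕ):ℝ) by norm_num, Real.rpow_natCast]
    rwa [h2] at h
  have hnorm : ∑' z, F z = ‖φ‖ ^ 2 := by
    have h := lp.norm_rpow_eq_tsum hp φ
    have h1 : ‖φ‖ ^ (2 : ℝ≥0∞).toReal = ‖φ‖ ^ 2 := by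
      rw [show (2 : ℝ≥0∞).toReal = ((2:ℕ):ℝ) by norm_num, Real.rpow_natCast]
    have h2 : (fun i : Fin n → ℤ => ‖φ i‖ ^ (2 : ℝ≥0∞).toReal) = F := by
      funext i
      rw [show (2 : ℝ≥0∞).toReal = ((2:ℕ):ℝ) by norm_num, Real.rpow_natCast]
    rw [h1, h2] at h
    exact h.symm
  -- shifted sets
  set Sb : (Fin n → Fin K) → Set (Fin n → ℤ) := fun b =>
    {z : Fin n → ℤ | ∀ i, (L : ℤ) ≤ (z i - (b i : ℤ)) % K ∧ (z i - (b i : ℤ)) % K < (K:ℤ) - L}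
    with hSb
  have hmemS : ∀ w : Fin n → ℤ, w ∈ S ↔ ∀ i, (L : ℤ) ≤ w i % K ∧ w i % K < (K : ℤ) - L :=
    fun w => stmt10_mem_iff K L hK w
  -- step A: rewrite each inner tsum as a tsum of an indicator
  have stepA : ∀ b : Fin n → Fin K,
      (∑' a : S, F ((a : Fin n → ℤ) + fun i => ((b i : ℤ))))
        = ∑' z, (Sb b).indicator F z := by
    intro b
    set bz : Fin n → ℤ := fun i => (b i : ℤ) with hbz
    let e : S ≃ (Sb b) :=
      { toFun := fun a => ⟨(a : Fin n → ℤ) + bz, by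
          have ha := (hmemS a).1 a.2
          intro i
          simpa [hbz] using ha i⟩
        invFun := fun z => ⟨(z : Fin n → ℤ) - bz, by
          apply (hmemS _).2
          intro i
          simpa using z.2 i⟩
        left_inv := fun a => by ext : 1; simp
        right_inv := fun z => by ext : 1; simp }
    have he := e.tsum_eq (fun z : (Sb b) => F (z : Fin n → ℤ))
    have : (∑' a : S, F ((a : Fin n → ℤ) + bz)) = ∑' z : (Sb b), F (z : Fin n → ℤ) := he
    rw [this, tsum_subtype]
  -- step C: pointwise count
  have stepC : ∀ z : Fin n → ℤ,
      (∑ b : Fin n → Fin K, (Sb b).indicator F z) = ((K:ℝ) - 2 * L) ^ n * F z := by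
    intro z
    have h1 : ∀ b : Fin n → Fin K, (Sb b).indicator F z
        = (if ∀ i, (L : ℤ) ≤ (z i - (b i : ℤ)) % K ∧ (z i - (b i : ℤ)) % K < (K:ℤ) - L
            then (1:ℝ) else 0) * F z := by
      intro b
      have hiff : z ∈ Sb b ↔ (∀ i, (L : ℤ) ≤ (z i - (b i : ℤ)) % K ∧
          (z i - (b i : ℤ)) % K < (K:ℤ) - L) := Iff.rfl
      rw [Set.indicator_apply]
      split_ifs with h h' h'
      · rw [one_mul]
      · exact absurd (hiff.1 h) h'
      · exact absurd (hiff.2 h') h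
      · rw [zero_mul]
    simp_rw [h1, ← Finset.sum_mul]
    congr 1
    have h2 : ∀ b : Fin n → Fin K,
        (if ∀ i, (L : ℤ) ≤ (z i - (b i : ℤ)) % K ∧ (z i - (b i : ℤ)) % K < (K:ℤ) - L
            then (1:ℝ) else 0)
        = ∏ i, (if (L : ℤ) ≤ (z i - (b i : ℤ)) % K ∧ (z i - (b i : ℤ)) % K < (K:ℤ) - L
            then (1:ℝ) else 0) := by
      intro b
      rw [Finset.prod_boole]
      simp
    simp_rw [h2]
    rw [← Fintype.prod_sum (fun (i : Fin n) (c : Fin K) =>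
      if (L : ℤ) ≤ (z i - (c : ℤ)) % K ∧ (z i - (c : ℤ)) % K < (K:ℤ) - L then (1:ℝ) else 0)]
    have h3 : ∀ i : Fin n,
        (∑ c : Fin K, if (L : ℤ) ≤ (z i - (c : ℤ)) % K ∧ (z i - (c : ℤ)) % K < (K:ℤ) - L
          then (1:ℝ) else 0) = (K : ℝ) - 2 * L := fun i => stmt10_coord_sum K L hK (z i)
    simp_rw [h3]
    rw [Finset.prod_const, Finset.card_univ, Fintype.card_fin]
  -- part (i)
  have parti : (∑ b : Fin n → Fin K,
      ∑' a : S, F ((a : Fin n → ℤ) + fun i => ((b i : ℤ))))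
      = ((K : ℝ) - 2 * (L : ℝ)) ^ n * ‖φ‖ ^ 2 := by
    calc (∑ b : Fin n → Fin K, ∑' a : S, F ((a : Fin n → ℤ) + fun i => ((b i : ℤ))))
        = ∑ b : Fin n → Fin K, ∑' z, (Sb b).indicator F z := by
          exact Finset.sum_congr rfl fun b _ => stepA b
      _ = ∑' z, ∑ b : Fin n → Fin K, (Sb b).indicator F z :=
          (Summable.tsum_finsetSum (fun b _ => hF.indicator (Sb b))).symm
      _ = ∑' z, ((K:ℝ) - 2 * L) ^ n * F z := by
          exact tsum_congr stepC
      _ = ((K:ℝ) - 2 * L) ^ n * ∑' z, F z := tsum_mul_left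
      _ = ((K : ℝ) - 2 * (L : ℝ)) ^ n * ‖φ‖ ^ 2 := by rw [hnorm]
  refine ⟨parti, ?_⟩
  -- part (ii)
  have hcard : (Finset.univ : Finset (Fin n → Fin K)).card = K ^ n := by
    simp [Finset.card_univ]
  have hne : (Finset.univ : Finset (Fin n → Fin K)).Nonempty := by
    have : Nonempty (Fin n → Fin K) := ⟨fun _ => ⟨0, hK0⟩⟩
    exact Finset.univ_nonempty
  have hsum_le : ∑ _b : Fin n → Fin K, (1 - 2 * (L : ℝ) / (K : ℝ)) ^ n * ‖φ‖ ^ 2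
      ≤ ∑ b : Fin n → Fin K,
          ∑' a : S, F ((a : Fin n → ℤ) + fun i => ((b i : ℤ))) := by
    rw [parti, Finset.sum_const, hcard, nsmul_eq_mul, Nat.cast_pow]
    have hKR : (0:ℝ) < K := by exact_mod_cast hK0
    have : (K:ℝ) ^ n * ((1 - 2 * (L : ℝ) / (K : ℝ)) ^ n * ‖φ‖ ^ 2)
        = ((K:ℝ) * (1 - 2 * (L : ℝ) / (K : ℝ))) ^ n * ‖φ‖ ^ 2 := by
      rw [mul_pow]; ring
    rw [this]
    have : (K:ℝ) * (1 - 2 * (L : ℝ) / (K : ℝ)) = (K:ℝ) - 2 * L := by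
      field_simp
    rw [this]
  obtain ⟨b, -, hb⟩ := Finset.exists_le_of_sum_le hne hsum_le
  exact ⟨b, hb⟩
end
end

section
/- (Von Neumann's condition.) Let m, m' ≥ 1, let k_1, …, k_m, k'_1, …, k'_{m'} ∈ ℤⁿ, and let h_1, …, h_m, h'_1, …, h'_{m'} : ℝⁿ → ℂ be bounded and Lipschitz continuous. Then lim_{ℏ → 0⁺} ‖ (Σ_{j=1}^m T_{k_j,h_j,ℏ}) ∘ (Σ_{i=1}^{m'} T_{k'_i,h'_i,ℏ}) − Σ_{j=1}^m Σ_{i=1}^{m'} T_{k_j + k'_i, h_j·h'_i, ℏ} ‖ = 0, where the norm is the operator norm on ℓ²(ℤⁿ). In other words, for f = Σ_j e_{k_j} ⊗ h_j and g = Σ_i e_{k'_i} ⊗ h'_i one has ‖Q^W_ℏ(f) Q^W_ℏ(g) − Q^W_ℏ(fg)‖ → 0 as ℏ → 0. -/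
open scoped Real
open Filter MeasureTheory

noncomputable section

/-- `ℓ²(ℤⁿ)` with values in `ℂ`. -/
abbrev ℓ2 (n : ℕ) := lp (fun _ : Fin n → ℤ => ℂ) 2

set_option maxHeartbeats 1000000 in
lemma shift_norm_le {n : ℕ} (D : ℓ2 n →L[ℂ] ℓ2 n) (s : Fin n → ℤ)
    {M : ℝ} (hM : 0 ≤ M)
    (hD : ∀ (φ : ℓ2 n) (a : Fin n → ℤ), ‖(D φ) a‖ ≤ M * ‖φ (a - s)‖) :
    ‖D‖ ≤ M := by
  have h2 : (0:ℝ) < (2 : ENNReal).toReal := by norm_num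
  apply D.opNorm_le_bound hM
  intro φ
  apply lp.norm_le_of_tsum_le h2 (by positivity)
  have hφ : Summable fun b : Fin n → ℤ => ‖φ b‖ ^ (2 : ENNReal).toReal :=
    (lp.memℓp φ).summable h2
  have hre : Summable fun a : Fin n → ℤ => ‖φ (a - s)‖ ^ (2 : ENNReal).toReal :=
    (Equiv.subRight s).summable_iff.2 hφ
  calc ∑' a, ‖(D φ) a‖ ^ (2 : ENNReal).toReal
      ≤ ∑' a, M ^ (2 : ENNReal).toReal * ‖φ (a - s)‖ ^ (2 : ENNReal).toReal := by
        refine Summable.tsum_le_tsum (fun a => ?_) ((lp.memℓp (D φ)).summable h2) (hre.mul_left _)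
        rw [← Real.mul_rpow hM (norm_nonneg _)]
        exact Real.rpow_le_rpow (norm_nonneg _) (hD φ a) h2.le
    _ = M ^ (2 : ENNReal).toReal * ∑' a, ‖φ (a - s)‖ ^ (2 : ENNReal).toReal := tsum_mul_left
    _ = M ^ (2 : ENNReal).toReal * ∑' b, ‖φ b‖ ^ (2 : ENNReal).toReal := by
        congr 1; exact (Equiv.subRight s).tsum_eq (fun b => ‖φ b‖ ^ (2 : ENNReal).toReal)
    _ = M ^ (2 : ENNReal).toReal * ‖φ‖ ^ (2 : ENNReal).toReal := by
        rw [lp.norm_rpow_eq_tsum h2]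
    _ = (M * ‖φ‖) ^ (2 : ENNReal).toReal := (Real.mul_rpow hM (norm_nonneg _)).symm


/-- Von Neumann's condition: ‖Q^W_ℏ(f) Q^W_ℏ(g) − Q^W_ℏ(fg)‖ → 0 as ℏ → 0⁺, for
f = Σ_j e_{k_j} ⊗ h_j and g = Σ_i e_{k'_i} ⊗ h'_i with all h_j, h'_i bounded Lipschitz. -/
theorem stmt_13 (n : ℕ) (hn : 1 ≤ n) (m m' : ℕ) (hm : 1 ≤ m) (hm' : 1 ≤ m')
    (k : Fin m → Fin n → ℤ) (k' : Fin m' → Fin n → ℤ)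
    (h : Fin m → (Fin n → ℝ) → ℂ) (h' : Fin m' → (Fin n → ℝ) → ℂ)
    (hbd : ∀ j, ∃ C : ℝ, ∀ p, ‖h j p‖ ≤ C)
    (hbd' : ∀ i, ∃ C : ℝ, ∀ p, ‖h' i p‖ ≤ C)
    (hlip : ∀ j, ∃ C : NNReal, LipschitzWith C (h j))
    (hlip' : ∀ i, ∃ C : NNReal, LipschitzWith C (h' i))
    (T : ℝ → Fin m → (ℓ2 n →L[ℂ] ℓ2 n))
    (T' : ℝ → Fin m' → (ℓ2 n →L[ℂ] ℓ2 n))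
    (TP : ℝ → Fin m → Fin m' → (ℓ2 n →L[ℂ] ℓ2 n))
    (hT : ∀ ℏ : ℝ, 0 < ℏ → ∀ (j : Fin m) (φ : ℓ2 n) (a : Fin n → ℤ),
      ((T ℏ j) φ) a = h j (fun i => π * ℏ * (2 * (a i : ℝ) - (k j i : ℝ))) * φ (a - k j))
    (hT' : ∀ ℏ : ℝ, 0 < ℏ → ∀ (i : Fin m') (φ : ℓ2 n) (a : Fin n → ℤ),
      ((T' ℏ i) φ) a = h' i (fun t => π * ℏ * (2 * (a t : ℝ) - (k' i t : ℝ))) * φ (a - k' i))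
    (hTP : ∀ ℏ : ℝ, 0 < ℏ → ∀ (j : Fin m) (i : Fin m') (φ : ℓ2 n) (a : Fin n → ℤ),
      ((TP ℏ j i) φ) a = (h j * h' i) (fun t => π * ℏ * (2 * (a t : ℝ) - ((k j + k' i) t : ℝ))) *
        φ (a - (k j + k' i))) :
    Tendsto (fun ℏ : ℝ =>
        ‖(∑ j, T ℏ j).comp (∑ i, T' ℏ i) - ∑ j, ∑ i, TP ℏ j i‖)
      (nhdsWithin 0 (Set.Ioi 0)) (nhds 0) := by
  choose C hC using hbd
  choose C' hC' using hbd'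
  choose L hL using hlip
  choose L' hL' using hlip'
  have hC0 : ∀ j, 0 ≤ C j := fun j => le_trans (norm_nonneg _) (hC j 0)
  have hC'0 : ∀ i, 0 ≤ C' i := fun i => le_trans (norm_nonneg _) (hC' i 0)
  set B : Fin m → ℝ := fun j => ∑ t, |(k j t : ℝ)| with hBdef
  set B' : Fin m' → ℝ := fun i => ∑ t, |(k' i t : ℝ)| with hB'def
  have hBle : ∀ j t, |(k j t : ℝ)| ≤ B j := fun j t =>
    Finset.single_le_sum (f := fun t => |(k j t : ℝ)|) (fun t _ => abs_nonneg _)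
      (Finset.mem_univ t)
  have hB'le : ∀ i t, |(k' i t : ℝ)| ≤ B' i := fun i t =>
    Finset.single_le_sum (f := fun t => |(k' i t : ℝ)|) (fun t _ => abs_nonneg _)
      (Finset.mem_univ t)
  have hB0 : ∀ j, 0 ≤ B j := fun j => Finset.sum_nonneg fun t _ => abs_nonneg _
  have hB'0 : ∀ i, 0 ≤ B' i := fun i => Finset.sum_nonneg fun t _ => abs_nonneg _
  set cc : Fin m → Fin m' → ℝ :=
    fun j i => π * (C j * (L' i : ℝ) * B j + C' i * (L j : ℝ) * B' i) with hccdef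
  have hcc0 : ∀ j i, 0 ≤ cc j i := by
    intro j i
    have := hC0 j; have := hC'0 i; have := hB0 j; have := hB'0 i
    have := Real.pi_pos
    positivity
  set c : ℝ := ∑ j, ∑ i, cc j i with hcdef
  have key : ∀ ℏ : ℝ, 0 < ℏ →
      ‖(∑ j, T ℏ j).comp (∑ i, T' ℏ i) - ∑ j, ∑ i, TP ℏ j i‖ ≤ ℏ * c := by
    intro ℏ hℏ
    have hsplit : (∑ j, T ℏ j).comp (∑ i, T' ℏ i) - ∑ j, ∑ i, TP ℏ j i
        = ∑ j, ∑ i, ((T ℏ j).comp (T' ℏ i) - TP ℏ j i) := by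
      rw [show (∑ j, T ℏ j).comp (∑ i, T' ℏ i) = (∑ j, T ℏ j) * (∑ i, T' ℏ i) from rfl,
        Finset.sum_mul_sum, ← Finset.sum_sub_distrib]
      refine Finset.sum_congr rfl fun j _ => ?_
      rw [← Finset.sum_sub_distrib]
      rfl
    rw [hsplit]
    have hbound : ∀ j i, ‖(T ℏ j).comp (T' ℏ i) - TP ℏ j i‖ ≤ ℏ * cc j i := by
      intro j i
      refine shift_norm_le _ (k j + k' i) (mul_nonneg hℏ.le (hcc0 j i)) ?_
      intro φ a
      set P : Fin n → ℝ := fun t => π * ℏ * (2 * (a t : ℝ) - (k j t : ℝ)) with hP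
      set P' : Fin n → ℝ :=
        fun t => π * ℏ * (2 * ((a - k j) t : ℝ) - (k' i t : ℝ)) with hP'
      set Q : Fin n → ℝ :=
        fun t => π * ℏ * (2 * (a t : ℝ) - ((k j + k' i) t : ℝ)) with hQ
      have e1 : (((T ℏ j).comp (T' ℏ i) - TP ℏ j i) φ) a
          = (h j P * h' i P' - h j Q * h' i Q) * φ (a - (k j + k' i)) := by
        have := hT ℏ hℏ j ((T' ℏ i) φ) a
        have := hT' ℏ hℏ i φ (a - k j)
        have := hTP ℏ hℏ j i φ a
        simp only [ContinuousLinearMap.sub_apply, lp.coeFn_sub, Pi.sub_apply,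
          ContinuousLinearMap.comp_apply]
        rw [hT ℏ hℏ j ((T' ℏ i) φ) a, hT' ℏ hℏ i φ (a - k j), hTP ℏ hℏ j i φ a,
          sub_sub, Pi.mul_apply, ← hP, ← hP', ← hQ]
        ring
      rw [e1]
      have hPQ : dist P Q ≤ π * ℏ * B' i := by
        rw [dist_pi_le_iff (mul_nonneg (by positivity) (hB'0 i))]
        intro t
        rw [Real.dist_eq]
        have : P t - Q t = π * ℏ * (k' i t : ℝ) := by
          simp only [hP, hQ, Pi.add_apply]
          push_cast
          ring
        rw [this, abs_mul, abs_of_pos (by positivity : (0:ℝ) < π * ℏ)]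
        exact mul_le_mul_of_nonneg_left (hB'le i t) (by positivity)
      have hP'Q : dist P' Q ≤ π * ℏ * B j := by
        rw [dist_pi_le_iff (mul_nonneg (by positivity) (hB0 j))]
        intro t
        rw [Real.dist_eq]
        have : P' t - Q t = -(π * ℏ * (k j t : ℝ)) := by
          simp only [hP', hQ, Pi.add_apply, Pi.sub_apply]
          push_cast
          ring
        rw [this, abs_neg, abs_mul, abs_of_pos (by positivity : (0:ℝ) < π * ℏ)]
        exact mul_le_mul_of_nonneg_left (hBle j t) (by positivity)
      have hdh' : ‖h' i P' - h' i Q‖ ≤ (L' i : ℝ) * (π * ℏ * B j) := by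
        rw [← dist_eq_norm]
        exact le_trans ((hL' i).dist_le_mul P' Q)
          (mul_le_mul_of_nonneg_left hP'Q (L' i).coe_nonneg)
      have hdh : ‖h j P - h j Q‖ ≤ (L j : ℝ) * (π * ℏ * B' i) := by
        rw [← dist_eq_norm]
        exact le_trans ((hL j).dist_le_mul P Q)
          (mul_le_mul_of_nonneg_left hPQ (L j).coe_nonneg)
      have hmul : ‖h j P * h' i P' - h j Q * h' i Q‖ ≤ ℏ * cc j i := by
        have hid : h j P * h' i P' - h j Q * h' i Q
            = h j P * (h' i P' - h' i Q) + (h j P - h j Q) * h' i Q := by ring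
        calc ‖h j P * h' i P' - h j Q * h' i Q‖
            ≤ ‖h j P * (h' i P' - h' i Q)‖ + ‖(h j P - h j Q) * h' i Q‖ := by
              rw [hid]; exact norm_add_le _ _
          _ = ‖h j P‖ * ‖h' i P' - h' i Q‖ + ‖h j P - h j Q‖ * ‖h' i Q‖ := by
              rw [norm_mul, norm_mul]
          _ ≤ C j * ((L' i : ℝ) * (π * ℏ * B j))
              + (L j : ℝ) * (π * ℏ * B' i) * C' i := by
              refine add_le_add
                (mul_le_mul (hC j P) hdh'
                  (norm_nonneg _) (hC0 j))
                (mul_le_mul hdh (hC' i Q)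
                  (norm_nonneg _)
                  (mul_nonneg (L j).coe_nonneg (mul_nonneg (by positivity) (hB'0 i))))
          _ = ℏ * cc j i := by rw [hccdef]; ring
      calc ‖(h j P * h' i P' - h j Q * h' i Q) * φ (a - (k j + k' i))‖
          = ‖h j P * h' i P' - h j Q * h' i Q‖ * ‖φ (a - (k j + k' i))‖ := norm_mul _ _
        _ ≤ (ℏ * cc j i) * ‖φ (a - (k j + k' i))‖ :=
            mul_le_mul_of_nonneg_right hmul (norm_nonneg _)
    calc ‖∑ j, ∑ i, ((T ℏ j).comp (T' ℏ i) - TP ℏ j i)‖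
        ≤ ∑ j, ∑ i, ‖(T ℏ j).comp (T' ℏ i) - TP ℏ j i‖ :=
          (norm_sum_le _ _).trans (Finset.sum_le_sum fun j _ => norm_sum_le _ _)
      _ ≤ ∑ j, ∑ i, ℏ * cc j i :=
          Finset.sum_le_sum fun j _ => Finset.sum_le_sum fun i _ => hbound j i
      _ = ℏ * c := by rw [hcdef]; simp [Finset.mul_sum]
  have h0 : Tendsto (fun ℏ : ℝ => ℏ * c) (nhdsWithin 0 (Set.Ioi 0)) (nhds 0) := by
    have h1 : Tendsto (fun ℏ : ℝ => ℏ * c) (nhds 0) (nhds (0 * c)) :=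
      (continuous_id.mul (continuous_const : Continuous fun _ : ℝ => c)).tendsto 0
    rw [zero_mul] at h1
    exact h1.mono_left nhdsWithin_le_nhds
  refine squeeze_zero' ?_ ?_ h0
  · filter_upwards [self_mem_nhdsWithin] with ℏ hℏ using norm_nonneg _
  · filter_upwards [self_mem_nhdsWithin] with ℏ hℏ using key ℏ hℏ
end
end

section
/- (Dirac's condition.) Let m, m' ≥ 1, let k_1, …, k_m, k'_1, …, k'_{m'} ∈ ℤⁿ, and let h_1, …, h_m, h'_1, …, h'_{m'} : ℝⁿ → ℂ be twice continuously differentiable functions that are bounded and have bounded first- and second-order derivatives. For 1 ≤ j ≤ m and 1 ≤ i ≤ m' define b_{j,i} : ℝⁿ → ℂ by b_{j,i}(p) = 2πi( (∇_{k'_i} h_j)(p) · h'_i(p) − h_j(p) · (∇_{k_j} h'_i)(p) ), where ∇_v h(p) denotes the directional derivative of h at p in the direction v ∈ ℝⁿ. Then, writing T_f = Σ_j T_{k_j,h_j,ℏ} and T_g = Σ_i T_{k'_i,h'_i,ℏ}, one has lim_{ℏ → 0⁺} ‖ (−iℏ)^{−1} (T_f T_g − T_g T_f) − Σ_{j=1}^m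 Σ_{i=1}^{m'} T_{k_j + k'_i, b_{j,i}, ℏ} ‖ = 0, where the norm is the operator norm on ℓ²(ℤⁿ). In other words, for f = Σ_j e_{k_j} ⊗ h_j and g = Σ_i e_{k'_i} ⊗ h'_i one has ‖(−iℏ)^{−1}[Q^W_ℏ(f), Q^W_ℏ(g)] − Q^W_ℏ({f,g})‖ → 0 as ℏ → 0, where {f,g} = Σ_{j,i} e_{k_j+k'_i} ⊗ b_{j,i} is the canonical Poisson bracket on T*𝕋ⁿ. -/
open scoped Real
open Filter MeasureTheory

noncomputable section

open scoped ENNReal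

section DiracAux

variable {E F : Type*} [NormedAddCommGroup E] [NormedSpace ℝ E]
  [NormedAddCommGroup F] [NormedSpace ℝ F]

lemma my_norm_fderiv2 (f : E → F) (x : E) :
    ‖fderiv ℝ (fderiv ℝ f) x‖ = ‖iteratedFDeriv ℝ 2 f x‖ := by
  rw [← norm_iteratedFDeriv_zero (𝕜 := ℝ) (f := fderiv ℝ (fderiv ℝ f)) (x := x),
    norm_iteratedFDeriv_fderiv, norm_iteratedFDeriv_fderiv]

lemma my_lip (f : E → F) (hf : Differentiable ℝ f) {C : ℝ}
    (hC : ∀ x, ‖fderiv ℝ f x‖ ≤ C) (x y : E) : ‖f y - f x‖ ≤ C * ‖y - x‖ :=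
  convex_univ.norm_image_sub_le_of_norm_fderiv_le (fun z _ => hf z)
    (fun z _ => hC z) (Set.mem_univ x) (Set.mem_univ y)

lemma my_taylor (f : E → F) (hf : ContDiff ℝ 2 f) {C : ℝ}
    (hC : ∀ x, ‖iteratedFDeriv ℝ 2 f x‖ ≤ C) (p v : E) :
    ‖f (p + v) - f p - fderiv ℝ f p v‖ ≤ C * ‖v‖ * ‖v‖ := by
  have hC0 : 0 ≤ C := le_trans (norm_nonneg _) (hC p)
  have hdf : Differentiable ℝ f := hf.differentiable (by norm_num)
  have hdf1 : Differentiable ℝ (fderiv ℝ f) :=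
    (hf.fderiv_right (m := 1) (by norm_num)).differentiable (by norm_num)
  have hlip : ∀ x y : E, ‖fderiv ℝ f y - fderiv ℝ f x‖ ≤ C * ‖y - x‖ := by
    intro x y
    exact my_lip (fderiv ℝ f) hdf1 (fun z => by rw [my_norm_fderiv2]; exact hC z) x y
  set g : E → F := fun y => f y - fderiv ℝ f p y with hg
  have hgd : ∀ y, DifferentiableAt ℝ g y := fun y =>
    (hdf y).sub ((fderiv ℝ f p).differentiable y)
  have hgder : ∀ y, fderiv ℝ g y = fderiv ℝ f y - fderiv ℝ f p := by
    intro y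
    rw [hg, fderiv_fun_sub (hdf y) ((fderiv ℝ f p).differentiable y),
      (fderiv ℝ f p).fderiv]
  have key : ‖g (p + v) - g p‖ ≤ (C * ‖v‖) * ‖(p + v) - p‖ := by
    refine (convex_closedBall p ‖v‖).norm_image_sub_le_of_norm_fderiv_le (fun z _ => hgd z) ?_ (Metric.mem_closedBall_self (norm_nonneg v)) ?_
    · intro z hz
      rw [hgder z]
      calc ‖fderiv ℝ f z - fderiv ℝ f p‖ ≤ C * ‖z - p‖ := hlip p z
        _ ≤ C * ‖v‖ := by
            refine mul_le_mul_of_nonneg_left ?_ hC0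
            simpa [dist_eq_norm] using hz
    · simp [Metric.mem_closedBall, dist_eq_norm]
  have h1 : g (p + v) - g p = f (p + v) - f p - fderiv ℝ f p v := by
    simp only [hg]
    have : fderiv ℝ f p (p + v) - fderiv ℝ f p p = fderiv ℝ f p v := by
      rw [← map_sub]; congr 1; abel
    rw [← this]; abel
  rw [h1] at key
  calc ‖f (p + v) - f p - fderiv ℝ f p v‖ ≤ (C * ‖v‖) * ‖(p+v) - p‖ := key
    _ = C * ‖v‖ * ‖v‖ := by congr 1; simp

lemma my_bracket (f g : E → ℂ) (hf : ContDiff ℝ 2 f) (hg : ContDiff ℝ 2 g)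
    {Cf0 Cf1 Cf2 Cg0 Cg2 : ℝ}
    (hf0 : ∀ x, ‖f x‖ ≤ Cf0) (hf1 : ∀ x, ‖fderiv ℝ f x‖ ≤ Cf1)
    (hf2 : ∀ x, ‖iteratedFDeriv ℝ 2 f x‖ ≤ Cf2)
    (hg0 : ∀ x, ‖g x‖ ≤ Cg0) (hg2 : ∀ x, ‖iteratedFDeriv ℝ 2 g x‖ ≤ Cg2)
    (p u u' : E) :
    ‖f (p+u') * g (p-u) - f (p-u') * g (p+u)
        - 2 * (fderiv ℝ f p u' * g p - f p * fderiv ℝ g p u)‖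
      ≤ 2*Cf0*Cg2*(‖u‖*‖u‖) + 2*Cf1*‖u'‖*Cg2*(‖u‖*‖u‖) + 2*Cf2*(‖u'‖*‖u'‖)*Cg0 := by
  have hCf0 : 0 ≤ Cf0 := le_trans (norm_nonneg _) (hf0 p)
  have hCf1 : 0 ≤ Cf1 := le_trans (norm_nonneg _) (hf1 p)
  have hCg0 : 0 ≤ Cg0 := le_trans (norm_nonneg _) (hg0 p)
  have hCf2 : 0 ≤ Cf2 := le_trans (norm_nonneg _) (hf2 p)
  have hCg2 : 0 ≤ Cg2 := le_trans (norm_nonneg _) (hg2 p)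
  set F := f p with hF
  set G := g p with hG
  set DF := fderiv ℝ f p u' with hDF
  set DG := fderiv ℝ g p u with hDG
  set r₁ := f (p+u') - F - DF with hr₁
  set r₂ := f (p-u') - F + DF with hr₂
  set s₁ := g (p-u) - G + DG with hs₁
  set s₂ := g (p+u) - G - DG with hs₂
  have key : f (p+u') * g (p-u) - f (p-u') * g (p+u)
      - 2 * (DF * G - F * DG)
      = F*(s₁ - s₂) + DF*(s₁ + s₂) + r₁ * g (p-u) - r₂ * g (p+u) := by
    have e1 : f (p+u') = F + DF + r₁ := by rw [hr₁]; ring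
    have e2 : f (p-u') = F - DF + r₂ := by rw [hr₂]; ring
    have e3 : g (p-u) = G - DG + s₁ := by rw [hs₁]; ring
    have e4 : g (p+u) = G + DG + s₂ := by rw [hs₂]; ring
    rw [e1, e2, e3, e4]; ring
  rw [key]
  have hbr₁ : ‖r₁‖ ≤ Cf2 * (‖u'‖ * ‖u'‖) := by
    have := my_taylor f hf hf2 p u'
    rw [hr₁, hF, hDF]; calc _ ≤ Cf2 * ‖u'‖ * ‖u'‖ := this
      _ = _ := by ring
  have hbr₂ : ‖r₂‖ ≤ Cf2 * (‖u'‖ * ‖u'‖) := by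
    have h0 := my_taylor f hf hf2 p (-u')
    rw [map_neg, norm_neg] at h0
    have : r₂ = f (p + -u') - f p - (- fderiv ℝ f p u') := by
      rw [hr₂, hF, hDF]; simp only [sub_eq_add_neg]; ring
    rw [this]; calc _ ≤ Cf2 * ‖u'‖ * ‖u'‖ := h0
      _ = _ := by ring
  have hbs₁ : ‖s₁‖ ≤ Cg2 * (‖u‖ * ‖u‖) := by
    have h0 := my_taylor g hg hg2 p (-u)
    rw [map_neg, norm_neg] at h0
    have : s₁ = g (p + -u) - g p - (- fderiv ℝ g p u) := by
      rw [hs₁, hG, hDG]; simp only [sub_eq_add_neg]; ring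
    rw [this]; calc _ ≤ Cg2 * ‖u‖ * ‖u‖ := h0
      _ = _ := by ring
  have hbs₂ : ‖s₂‖ ≤ Cg2 * (‖u‖ * ‖u‖) := by
    have h0 := my_taylor g hg hg2 p u
    rw [hs₂, hG, hDG]
    calc ‖g (p+u) - G - DG‖ ≤ Cg2 * ‖u‖ * ‖u‖ := h0
      _ = _ := by ring
  have hbDF : ‖DF‖ ≤ Cf1 * ‖u'‖ :=
    le_trans ((fderiv ℝ f p).le_opNorm u')
      (mul_le_mul_of_nonneg_right (hf1 p) (norm_nonneg u'))
  have t1 : ‖F*(s₁ - s₂)‖ ≤ Cf0 * (2 * (Cg2 * (‖u‖*‖u‖))) := by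
    rw [norm_mul]
    have : ‖s₁ - s₂‖ ≤ 2 * (Cg2 * (‖u‖*‖u‖)) := by
      calc ‖s₁ - s₂‖ ≤ ‖s₁‖ + ‖s₂‖ := norm_sub_le _ _
        _ ≤ _ := by linarith
    exact mul_le_mul (hf0 p) this (norm_nonneg _) hCf0
  have t2 : ‖DF*(s₁ + s₂)‖ ≤ (Cf1 * ‖u'‖) * (2 * (Cg2 * (‖u‖*‖u‖))) := by
    rw [norm_mul]
    have h2 : ‖s₁ + s₂‖ ≤ 2 * (Cg2 * (‖u‖*‖u‖)) := by
      calc ‖s₁ + s₂‖ ≤ ‖s₁‖ + ‖s₂‖ := norm_add_le _ _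
        _ ≤ _ := by linarith
    exact mul_le_mul hbDF h2 (norm_nonneg _) (by positivity)
  have t3 : ‖r₁ * g (p-u)‖ ≤ (Cf2 * (‖u'‖*‖u'‖)) * Cg0 := by
    rw [norm_mul]
    exact mul_le_mul hbr₁ (hg0 _) (norm_nonneg _) (mul_nonneg hCf2 (by positivity))
  have t4 : ‖r₂ * g (p+u)‖ ≤ (Cf2 * (‖u'‖*‖u'‖)) * Cg0 := by
    rw [norm_mul]
    exact mul_le_mul hbr₂ (hg0 _) (norm_nonneg _) (mul_nonneg hCf2 (by positivity))
  calc ‖F*(s₁ - s₂) + DF*(s₁ + s₂) + r₁ * g (p-u) - r₂ * g (p+u)‖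
      ≤ ‖F*(s₁ - s₂) + DF*(s₁ + s₂) + r₁ * g (p-u)‖ + ‖r₂ * g (p+u)‖ := norm_sub_le _ _
    _ ≤ ‖F*(s₁ - s₂)‖ + ‖DF*(s₁ + s₂)‖ + ‖r₁ * g (p-u)‖ + ‖r₂ * g (p+u)‖ := by
        have := norm_add₃_le (a := F*(s₁ - s₂)) (b := DF*(s₁ + s₂)) (c := r₁ * g (p-u))
        linarith
    _ ≤ _ := by linarith

lemma my_opnorm_le {n : ℕ} (A : ℓ2 n →L[ℂ] ℓ2 n) (κ : Fin n → ℤ)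
    (c : (Fin n → ℤ) → ℂ) {M : ℝ} (hM : 0 ≤ M) (hc : ∀ a, ‖c a‖ ≤ M)
    (hA : ∀ (φ : ℓ2 n) (a : Fin n → ℤ), (A φ) a = c a * φ (a - κ)) :
    ‖A‖ ≤ M := by
  refine A.opNorm_le_bound hM (fun φ => ?_)
  have hp : 0 < (2 : ℝ≥0∞).toReal := by norm_num
  refine lp.norm_le_of_forall_sum_le hp (by positivity) (fun s => ?_)
  have step1 : ∀ a, ‖(A φ) a‖ ^ (2:ℝ≥0∞).toReal
      ≤ M ^ (2:ℝ≥0∞).toReal * ‖φ (a - κ)‖ ^ (2:ℝ≥0∞).toReal := by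
    intro a
    rw [hA φ a, norm_mul, Real.mul_rpow (norm_nonneg _) (norm_nonneg _)]
    exact mul_le_mul_of_nonneg_right
      (Real.rpow_le_rpow (norm_nonneg _) (hc a) (by norm_num))
      (Real.rpow_nonneg (norm_nonneg _) _)
  calc ∑ a ∈ s, ‖(A φ) a‖ ^ (2:ℝ≥0∞).toReal
      ≤ ∑ a ∈ s, M ^ (2:ℝ≥0∞).toReal * ‖φ (a - κ)‖ ^ (2:ℝ≥0∞).toReal :=
        Finset.sum_le_sum (fun a _ => step1 a)
    _ = M ^ (2:ℝ≥0∞).toReal *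
        ∑ b ∈ s.map (Equiv.subRight κ).toEmbedding, ‖φ b‖ ^ (2:ℝ≥0∞).toReal := by
        rw [Finset.sum_map, ← Finset.mul_sum]
        rfl
    _ ≤ M ^ (2:ℝ≥0∞).toReal * ‖φ‖ ^ (2:ℝ≥0∞).toReal := by
        refine mul_le_mul_of_nonneg_left ?_ (Real.rpow_nonneg hM _)
        exact lp.sum_rpow_le_norm_rpow hp φ _
    _ = (M * ‖φ‖) ^ (2:ℝ≥0∞).toReal := by
        rw [Real.mul_rpow hM (norm_nonneg _)]

lemma my_norm_fderiv1 (f : E → ℂ) (x : E) :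
    ‖fderiv ℝ f x‖ = ‖iteratedFDeriv ℝ 1 f x‖ := by
  rw [← norm_iteratedFDeriv_zero (𝕜 := ℝ) (f := fderiv ℝ f) (x := x),
    norm_iteratedFDeriv_fderiv]


lemma my_single {n : ℕ} {ℏ : ℝ} (hℏ : 0 < ℏ) (κ κ' : Fin n → ℤ)
    (f g : (Fin n → ℝ) → ℂ) (hf : ContDiff ℝ 2 f) (hg : ContDiff ℝ 2 g)
    {Cf0 Cf1 Cf2 Cg0 Cg2 : ℝ}
    (hf0 : ∀ x, ‖f x‖ ≤ Cf0) (hf1 : ∀ x, ‖fderiv ℝ f x‖ ≤ Cf1)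
    (hf2 : ∀ x, ‖iteratedFDeriv ℝ 2 f x‖ ≤ Cf2)
    (hg0 : ∀ x, ‖g x‖ ≤ Cg0) (hg2 : ∀ x, ‖iteratedFDeriv ℝ 2 g x‖ ≤ Cg2)
    (S S' R : ℓ2 n →L[ℂ] ℓ2 n)
    (hS : ∀ (φ : ℓ2 n) (a : Fin n → ℤ),
      (S φ) a = f (fun t => π * ℏ * (2 * (a t : ℝ) - (κ t : ℝ))) * φ (a - κ))
    (hS' : ∀ (φ : ℓ2 n) (a : Fin n → ℤ),
      (S' φ) a = g (fun t => π * ℏ * (2 * (a t : ℝ) - (κ' t : ℝ))) * φ (a - κ'))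
    (hR : ∀ (φ : ℓ2 n) (a : Fin n → ℤ),
      (R φ) a = (2 * π * Complex.I) *
          (fderiv ℝ f (fun t => π * ℏ * (2 * (a t : ℝ) - ((κ + κ') t : ℝ)))
              (fun t => (κ' t : ℝ)) *
            g (fun t => π * ℏ * (2 * (a t : ℝ) - ((κ + κ') t : ℝ))) -
           f (fun t => π * ℏ * (2 * (a t : ℝ) - ((κ + κ') t : ℝ))) *
            fderiv ℝ g (fun t => π * ℏ * (2 * (a t : ℝ) - ((κ + κ') t : ℝ)))
              (fun t => (κ t : ℝ))) *
        φ (a - (κ + κ'))) :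
    ‖(-(Complex.I) * (ℏ:ℂ))⁻¹ • (S.comp S' - S'.comp S) - R‖
      ≤ (2*Cf0*Cg2*π^2*‖(fun t => (κ t : ℝ))‖^2
          + 2*Cf2*Cg0*π^2*‖(fun t => (κ' t : ℝ))‖^2) * ℏ
        + (2*Cf1*Cg2*π^3*‖(fun t => (κ' t : ℝ))‖*‖(fun t => (κ t : ℝ))‖^2) * ℏ^2 := by
  have hCf0 : 0 ≤ Cf0 := le_trans (norm_nonneg _) (hf0 0)
  have hCf1 : 0 ≤ Cf1 := le_trans (norm_nonneg _) (hf1 0)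
  have hCf2 : 0 ≤ Cf2 := le_trans (norm_nonneg _) (hf2 0)
  have hCg0 : 0 ≤ Cg0 := le_trans (norm_nonneg _) (hg0 0)
  have hCg2 : 0 ≤ Cg2 := le_trans (norm_nonneg _) (hg2 0)
  have hπ : (0:ℝ) < π := Real.pi_pos
  have hℏC : (ℏ:ℂ) ≠ 0 := by exact_mod_cast ne_of_gt hℏ
  set K : Fin n → ℝ := fun t => (κ t : ℝ) with hK
  set K' : Fin n → ℝ := fun t => (κ' t : ℝ) with hK'
  set P : (Fin n → ℤ) → (Fin n → ℝ) :=
    fun a => fun t => π * ℏ * (2 * (a t : ℝ) - ((κ + κ') t : ℝ)) with hP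
  set u : Fin n → ℝ := (π * ℏ) • K with hu
  set u' : Fin n → ℝ := (π * ℏ) • K' with hu'
  set d : (Fin n → ℤ) → ℂ := fun a => Complex.I * (ℏ:ℂ)⁻¹ *
    (f (P a + u') * g (P a - u) - f (P a - u') * g (P a + u)
      - 2 * (fderiv ℝ f (P a) u' * g (P a) - f (P a) * fderiv ℝ g (P a) u)) with hd
  -- the scalar identity
  have hdval : ∀ a : Fin n → ℤ, d a
      = (-(Complex.I) * (ℏ:ℂ))⁻¹ *
          (f (P a + u') * g (P a - u) - f (P a - u') * g (P a + u))
        - (2 * π * Complex.I) *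
            (fderiv ℝ f (P a) K' * g (P a) - f (P a) * fderiv ℝ g (P a) K) := by
    intro a
    have h1 : fderiv ℝ f (P a) u' = ((π * ℏ : ℝ) : ℂ) * fderiv ℝ f (P a) K' := by
      rw [hu', (fderiv ℝ f (P a)).map_smul, Complex.real_smul]
    have h2 : fderiv ℝ g (P a) u = ((π * ℏ : ℝ) : ℂ) * fderiv ℝ g (P a) K := by
      rw [hu, (fderiv ℝ g (P a)).map_smul, Complex.real_smul]
    have h3 : (-(Complex.I) * (ℏ:ℂ))⁻¹ = Complex.I * (ℏ:ℂ)⁻¹ := by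
      rw [mul_inv, inv_neg, Complex.inv_I, neg_neg]
    simp only [hd]
    rw [h1, h2, h3]
    push_cast
    field_simp
  -- pointwise formula
  have hpt : ∀ (φ : ℓ2 n) (a : Fin n → ℤ),
      (((-(Complex.I) * (ℏ:ℂ))⁻¹ • (S.comp S' - S'.comp S) - R) φ) a
        = d a * φ (a - (κ + κ')) := by
    intro φ a
    have ePa : (fun t => π * ℏ * (2 * (a t : ℝ) - ((κ + κ') t : ℝ))) = P a := rfl
    have eA : (fun t => π * ℏ * (2 * (a t : ℝ) - (κ t : ℝ))) = P a + u' := by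
      funext t
      simp only [hP, hu', hK', Pi.add_apply, Pi.smul_apply, smul_eq_mul]
      push_cast [Pi.add_apply]
      ring
    have eB : (fun t => π * ℏ * (2 * (((a - κ) t : ℤ) : ℝ) - (κ' t : ℝ))) = P a - u := by
      funext t
      simp only [hP, hu, hK, Pi.sub_apply, Pi.smul_apply, smul_eq_mul]
      push_cast [Pi.add_apply, Pi.sub_apply]
      ring
    have eC : (fun t => π * ℏ * (2 * (a t : ℝ) - (κ' t : ℝ))) = P a + u := by
      funext t
      simp only [hP, hu, hK, Pi.add_apply, Pi.smul_apply, smul_eq_mul]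
      push_cast [Pi.add_apply]
      ring
    have eD : (fun t => π * ℏ * (2 * (((a - κ') t : ℤ) : ℝ) - (κ t : ℝ))) = P a - u' := by
      funext t
      simp only [hP, hu', hK', Pi.sub_apply, Pi.smul_apply, smul_eq_mul]
      push_cast [Pi.add_apply, Pi.sub_apply]
      ring
    have eidx1 : a - κ - κ' = a - (κ + κ') := sub_sub a κ κ'
    have eidx2 : a - κ' - κ = a - (κ + κ') := by rw [sub_sub, add_comm κ' κ]
    have step : (((-(Complex.I) * (ℏ:ℂ))⁻¹ • (S.comp S' - S'.comp S) - R) φ) a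
        = (-(Complex.I) * (ℏ:ℂ))⁻¹ * ((S (S' φ)) a - (S' (S φ)) a) - (R φ) a := by
      simp only [ContinuousLinearMap.sub_apply, ContinuousLinearMap.smul_apply,
        ContinuousLinearMap.comp_apply, lp.coeFn_sub, lp.coeFn_smul, Pi.sub_apply,
        Pi.smul_apply, smul_eq_mul]
    rw [step, hS (S' φ) a, hS' (S φ) a, hS' φ (a - κ), hS φ (a - κ'), hR φ a,
      eA, eB, eC, eD, ePa, eidx1, eidx2, hdval a]
    ring
  -- norm bound on coefficients
  have hu_norm : ‖u‖ = π * ℏ * ‖K‖ := by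
    rw [hu, norm_smul, Real.norm_eq_abs, abs_of_pos (mul_pos hπ hℏ)]
  have hu'_norm : ‖u'‖ = π * ℏ * ‖K'‖ := by
    rw [hu', norm_smul, Real.norm_eq_abs, abs_of_pos (mul_pos hπ hℏ)]
  set M : ℝ := (2*Cf0*Cg2*π^2*‖K‖^2 + 2*Cf2*Cg0*π^2*‖K'‖^2) * ℏ
      + (2*Cf1*Cg2*π^3*‖K'‖*‖K‖^2) * ℏ^2 with hM
  have hM0 : 0 ≤ M := by
    have n1 : (0:ℝ) ≤ 2*Cf0*Cg2*π^2*‖K‖^2 := by positivity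
    have n2 : (0:ℝ) ≤ 2*Cf2*Cg0*π^2*‖K'‖^2 := by positivity
    have n3 : (0:ℝ) ≤ 2*Cf1*Cg2*π^3*‖K'‖*‖K‖^2 := by positivity
    have := hℏ.le
    positivity
  have hdb : ∀ a : Fin n → ℤ, ‖d a‖ ≤ M := by
    intro a
    have hbr := my_bracket f g hf hg hf0 hf1 hf2 hg0 hg2 (P a) u u'
    have hnorm : ‖d a‖ = ℏ⁻¹ *
        ‖f (P a + u') * g (P a - u) - f (P a - u') * g (P a + u)
          - 2 * (fderiv ℝ f (P a) u' * g (P a) - f (P a) * fderiv ℝ g (P a) u)‖ := by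
      simp only [hd]
      rw [norm_mul, norm_mul, Complex.norm_I, one_mul, norm_inv, Complex.norm_real,
        Real.norm_eq_abs, abs_of_pos hℏ]
    rw [hnorm]
    calc ℏ⁻¹ * ‖_‖ ≤ ℏ⁻¹ * (2*Cf0*Cg2*(‖u‖*‖u‖) + 2*Cf1*‖u'‖*Cg2*(‖u‖*‖u‖)
          + 2*Cf2*(‖u'‖*‖u'‖)*Cg0) :=
        mul_le_mul_of_nonneg_left hbr (inv_nonneg.mpr hℏ.le)
      _ = M := by
          rw [hu_norm, hu'_norm, hM]
          field_simp
          ring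
  exact my_opnorm_le _ (κ + κ') d hM0 hdb hpt

end DiracAux

/-- Dirac's condition: ‖(−iℏ)⁻¹[Q^W_ℏ(f), Q^W_ℏ(g)] − Q^W_ℏ({f,g})‖ → 0 as ℏ → 0⁺,
for f = Σ_j e_{k_j} ⊗ h_j, g = Σ_i e_{k'_i} ⊗ h'_i with h_j, h'_i of class C² with
bounded derivatives up to order 2, where {f,g} = Σ_{j,i} e_{k_j+k'_i} ⊗ b_{j,i} and
b_{j,i}(p) = 2πi((∇_{k'_i}h_j)(p)·h'_i(p) − h_j(p)·(∇_{k_j}h'_i)(p)). -/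
theorem stmt_14 (n : ℕ) (hn : 1 ≤ n) (m m' : ℕ) (hm : 1 ≤ m) (hm' : 1 ≤ m')
    (k : Fin m → Fin n → ℤ) (k' : Fin m' → Fin n → ℤ)
    (h : Fin m → (Fin n → ℝ) → ℂ) (h' : Fin m' → (Fin n → ℝ) → ℂ)
    (hsm : ∀ j, ContDiff ℝ 2 (h j)) (hsm' : ∀ i, ContDiff ℝ 2 (h' i))
    (hbd : ∀ j, ∀ d : ℕ, d ≤ 2 → ∃ C : ℝ, ∀ p, ‖iteratedFDeriv ℝ d (h j) p‖ ≤ C)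
    (hbd' : ∀ i, ∀ d : ℕ, d ≤ 2 → ∃ C : ℝ, ∀ p, ‖iteratedFDeriv ℝ d (h' i) p‖ ≤ C)
    (T : ℝ → Fin m → (ℓ2 n →L[ℂ] ℓ2 n))
    (T' : ℝ → Fin m' → (ℓ2 n →L[ℂ] ℓ2 n))
    (TB : ℝ → Fin m → Fin m' → (ℓ2 n →L[ℂ] ℓ2 n))
    (hT : ∀ ℏ : ℝ, 0 < ℏ → ∀ (j : Fin m) (φ : ℓ2 n) (a : Fin n → ℤ),
      ((T ℏ j) φ) a = h j (fun i => π * ℏ * (2 * (a i : ℝ) - (k j i : ℝ))) * φ (a - k j))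
    (hT' : ∀ ℏ : ℝ, 0 < ℏ → ∀ (i : Fin m') (φ : ℓ2 n) (a : Fin n → ℤ),
      ((T' ℏ i) φ) a = h' i (fun t => π * ℏ * (2 * (a t : ℝ) - (k' i t : ℝ))) * φ (a - k' i))
    (hTB : ∀ ℏ : ℝ, 0 < ℏ → ∀ (j : Fin m) (i : Fin m') (φ : ℓ2 n) (a : Fin n → ℤ),
      ((TB ℏ j i) φ) a =
        (fun p : Fin n → ℝ => (2 * π * Complex.I) *
            (fderiv ℝ (h j) p (fun t => (k' i t : ℝ)) * h' i p -
             h j p * fderiv ℝ (h' i) p (fun t => (k j t : ℝ))))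
          (fun t => π * ℏ * (2 * (a t : ℝ) - ((k j + k' i) t : ℝ))) *
        φ (a - (k j + k' i))) :
    Tendsto (fun ℏ : ℝ =>
        ‖(-(Complex.I) * (ℏ : ℂ))⁻¹ •
            ((∑ j, T ℏ j).comp (∑ i, T' ℏ i) - (∑ i, T' ℏ i).comp (∑ j, T ℏ j)) -
          ∑ j, ∑ i, TB ℏ j i‖)
      (nhdsWithin 0 (Set.Ioi 0)) (nhds 0) := by
  choose C0 hC0 using fun j => hbd j 0 (by norm_num)
  choose C1 hC1 using fun j => hbd j 1 (by norm_num)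
  choose C2 hC2 using fun j => hbd j 2 le_rfl
  choose D0 hD0 using fun i => hbd' i 0 (by norm_num)
  choose D1 hD1 using fun i => hbd' i 1 (by norm_num)
  choose D2 hD2 using fun i => hbd' i 2 le_rfl
  have hC0' : ∀ j p, ‖h j p‖ ≤ C0 j := fun j p => by
    rw [← norm_iteratedFDeriv_zero (𝕜 := ℝ) (f := h j) (x := p)]; exact hC0 j p
  have hC1' : ∀ j p, ‖fderiv ℝ (h j) p‖ ≤ C1 j := fun j p => by
    rw [my_norm_fderiv1]; exact hC1 j p
  have hD0' : ∀ i p, ‖h' i p‖ ≤ D0 i := fun i p => by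
    rw [← norm_iteratedFDeriv_zero (𝕜 := ℝ) (f := h' i) (x := p)]; exact hD0 i p
  set e1 : Fin m → Fin m' → ℝ := fun j i =>
    2*(C0 j)*(D2 i)*π^2*‖(fun t => ((k j) t : ℝ))‖^2
      + 2*(C2 j)*(D0 i)*π^2*‖(fun t => ((k' i) t : ℝ))‖^2 with he1
  set e2 : Fin m → Fin m' → ℝ := fun j i =>
    2*(C1 j)*(D2 i)*π^3*‖(fun t => ((k' i) t : ℝ))‖*‖(fun t => ((k j) t : ℝ))‖^2 with he2
  set E1 : ℝ := ∑ j, ∑ i, e1 j i with hE1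
  set E2 : ℝ := ∑ j, ∑ i, e2 j i with hE2
  have key : ∀ ℏ : ℝ, ℏ ∈ Set.Ioi (0:ℝ) →
      ‖(-(Complex.I) * (ℏ : ℂ))⁻¹ •
            ((∑ j, T ℏ j).comp (∑ i, T' ℏ i) - (∑ i, T' ℏ i).comp (∑ j, T ℏ j)) -
          ∑ j, ∑ i, TB ℏ j i‖ ≤ E1 * ℏ + E2 * ℏ^2 := by
    intro ℏ hℏ
    rw [Set.mem_Ioi] at hℏ
    have hsplit : (-(Complex.I) * (ℏ : ℂ))⁻¹ •
            ((∑ j, T ℏ j).comp (∑ i, T' ℏ i) - (∑ i, T' ℏ i).comp (∑ j, T ℏ j)) -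
          ∑ j, ∑ i, TB ℏ j i
        = ∑ j, ∑ i, ((-(Complex.I) * (ℏ : ℂ))⁻¹ •
            ((T ℏ j).comp (T' ℏ i) - (T' ℏ i).comp (T ℏ j)) - TB ℏ j i) := by
      have c1 : (∑ j, T ℏ j).comp (∑ i, T' ℏ i)
          = ∑ j, ∑ i, (T ℏ j).comp (T' ℏ i) := by
        rw [ContinuousLinearMap.finset_sum_comp]
        exact Finset.sum_congr rfl fun j _ => ContinuousLinearMap.comp_finset_sum _ _
      have c2 : (∑ i, T' ℏ i).comp (∑ j, T ℏ j)
          = ∑ j, ∑ i, (T' ℏ i).comp (T ℏ j) := by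
        rw [ContinuousLinearMap.finset_sum_comp]
        rw [Finset.sum_comm]
        exact Finset.sum_congr rfl fun j _ => ContinuousLinearMap.comp_finset_sum _ _
      rw [c1, c2]
      rw [← Finset.sum_sub_distrib]
      simp only [← Finset.sum_sub_distrib, Finset.smul_sum]
    rw [hsplit]
    have hone : ∀ (j : Fin m) (i : Fin m'),
        ‖(-(Complex.I) * (ℏ : ℂ))⁻¹ •
            ((T ℏ j).comp (T' ℏ i) - (T' ℏ i).comp (T ℏ j)) - TB ℏ j i‖
          ≤ e1 j i * ℏ + e2 j i * ℏ^2 := by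
      intro j i
      exact my_single hℏ (k j) (k' i) (h j) (h' i) (hsm j) (hsm' i)
        (hC0' j) (hC1' j) (hC2 j) (hD0' i) (hD2 i)
        (T ℏ j) (T' ℏ i) (TB ℏ j i)
        (hT ℏ hℏ j) (hT' ℏ hℏ i) (hTB ℏ hℏ j i)
    calc ‖∑ j, ∑ i, ((-(Complex.I) * (ℏ : ℂ))⁻¹ •
            ((T ℏ j).comp (T' ℏ i) - (T' ℏ i).comp (T ℏ j)) - TB ℏ j i)‖
        ≤ ∑ j, ∑ i, ‖(-(Complex.I) * (ℏ : ℂ))⁻¹ •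
            ((T ℏ j).comp (T' ℏ i) - (T' ℏ i).comp (T ℏ j)) - TB ℏ j i‖ := by
          refine le_trans (norm_sum_le _ _) (Finset.sum_le_sum fun j _ => norm_sum_le _ _)
      _ ≤ ∑ j, ∑ i, (e1 j i * ℏ + e2 j i * ℏ^2) :=
          Finset.sum_le_sum fun j _ => Finset.sum_le_sum fun i _ => hone j i
      _ = E1 * ℏ + E2 * ℏ^2 := by
          simp only [Finset.sum_add_distrib, ← Finset.sum_mul, hE1, hE2]
  refine squeeze_zero' (g := fun ℏ : ℝ => E1 * ℏ + E2 * ℏ^2) (Eventually.of_forall fun _ => norm_nonneg _) ?_ ?_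
  · exact eventually_mem_nhdsWithin.mono key
  · have hc : Continuous fun ℏ : ℝ => E1 * ℏ + E2 * ℏ^2 :=
      (continuous_const.mul continuous_id).add (continuous_const.mul (continuous_pow 2))
    have hcont := hc.tendsto 0
    norm_num at hcont
    exact hcont.mono_left nhdsWithin_le_nhds
end
end

section
/- Fix ℏ₀ > 0 and define h : ℝⁿ → ℝ by h(p) = sin(p₁/ℏ₀). Then: (i) T_{0,h,ℏ₀} = 0, so ‖T_{0,h,ℏ₀}‖ = 0; (ii) for every integer N ≥ 1, setting ℏ_N = ℏ₀(1 + 1/(4N)), one has ‖T_{0,h,ℏ_N}‖ = 1; and (iii) consequently the function ℏ ↦ ‖T_{0,h,ℏ}‖ on (0,∞) is not continuous at ℏ₀. (This shows that the map ℏ ↦ ‖Q^W_ℏ(f)‖ can fail to be continuous at points ℏ₀ > 0.) -/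
open scoped Real
open Filter MeasureTheory

noncomputable section

/-- Counterexample to continuity of ℏ ↦ ‖Q^W_ℏ(f)‖ at ℏ₀ > 0: with
h(p) = sin(p₁/ℏ₀) one has T_{0,h,ℏ₀} = 0, while ‖T_{0,h,ℏ_N}‖ = 1 for
ℏ_N = ℏ₀(1 + 1/(4N)); hence ℏ ↦ ‖T_{0,h,ℏ}‖ is not continuous at ℏ₀ on (0,∞). -/
theorem stmt_15 (n : ℕ) (hn : 0 < n) (ℏ₀ : ℝ) (hℏ₀ : 0 < ℏ₀)
    (T : ℝ → (ℓ2 n →L[ℂ] ℓ2 n))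
    (hT : ∀ ℏ : ℝ, 0 < ℏ → ∀ (φ : ℓ2 n) (a : Fin n → ℤ),
      ((T ℏ) φ) a =
        ((Real.sin ((π * ℏ * (2 * (a ⟨0, hn⟩ : ℝ) - ((0 : Fin n → ℤ) ⟨0, hn⟩ : ℝ))) / ℏ₀) : ℝ) : ℂ) *
          φ (a - 0)) :
    T ℏ₀ = 0 ∧ ‖T ℏ₀‖ = 0 ∧
    (∀ N : ℕ, 1 ≤ N → ‖T (ℏ₀ * (1 + 1 / (4 * (N : ℝ))))‖ = 1) ∧
    ¬ ContinuousWithinAt (fun ℏ : ℝ => ‖T ℏ‖) (Set.Ioi 0) ℏ₀ := by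
  have hp2 : (0:ℝ) < (2 : ENNReal).toReal := by norm_num
  -- (i)
  have h1 : T ℏ₀ = 0 := by
    ext φ a
    rw [hT ℏ₀ hℏ₀ φ a]
    have : (π * ℏ₀ * (2 * (a ⟨0, hn⟩ : ℝ) - ((0 : Fin n → ℤ) ⟨0, hn⟩ : ℝ))) / ℏ₀
        = (2 * (a ⟨0, hn⟩ : ℤ) : ℤ) * π := by
      field_simp
      push_cast [Pi.zero_apply]
      ring
    rw [this, Real.sin_int_mul_pi]
    simp
  have h2 : ∀ N : ℕ, 1 ≤ N → ‖T (ℏ₀ * (1 + 1 / (4 * (N : ℝ))))‖ = 1 := by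
    intro N hN
    set ℏN : ℝ := ℏ₀ * (1 + 1 / (4 * (N : ℝ))) with hℏNdef
    have hNpos : (0:ℝ) < N := by exact_mod_cast hN
    have hℏN : 0 < ℏN := by
      apply mul_pos hℏ₀; positivity
    -- the multiplier
    have hc : ∀ a : Fin n → ℤ,
        (π * ℏN * (2 * (a ⟨0, hn⟩ : ℝ) - ((0 : Fin n → ℤ) ⟨0, hn⟩ : ℝ))) / ℏ₀
          = π * (a ⟨0, hn⟩ : ℝ) / (2 * N) + (a ⟨0, hn⟩ : ℤ) * (2 * π) := by
      intro a
      simp only [hℏNdef]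
      field_simp
      simp only [Pi.zero_apply, Int.cast_zero]
      ring
    have habs : ∀ (φ : ℓ2 n) (a : Fin n → ℤ), ‖((T ℏN) φ) a‖ ≤ ‖φ a‖ := by
      intro φ a
      rw [hT ℏN hℏN φ a]
      rw [norm_mul, Complex.norm_real]
      have : φ (a - 0) = φ a := by rw [sub_zero]
      rw [this]
      calc |Real.sin _| * ‖φ a‖ ≤ 1 * ‖φ a‖ := by
            apply mul_le_mul_of_nonneg_right (Real.abs_sin_le_one _) (norm_nonneg _)
        _ = ‖φ a‖ := one_mul _
    have hub : ‖T ℏN‖ ≤ 1 := by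
      apply ContinuousLinearMap.opNorm_le_bound _ zero_le_one
      intro φ
      rw [one_mul]
      apply lp.norm_le_of_forall_sum_le hp2 (norm_nonneg _)
      intro s
      calc ∑ i ∈ s, ‖((T ℏN) φ) i‖ ^ (2 : ENNReal).toReal
          ≤ ∑ i ∈ s, ‖φ i‖ ^ (2 : ENNReal).toReal := by
            apply Finset.sum_le_sum
            intro i _
            exact Real.rpow_le_rpow (norm_nonneg _) (habs φ i) (le_of_lt hp2)
        _ ≤ ‖φ‖ ^ (2 : ENNReal).toReal := lp.sum_rpow_le_norm_rpow hp2 φ s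
    -- lower bound: apply to single at a with a₀ = N
    set a : Fin n → ℤ := fun _ => (N : ℤ) with ha
    set φ : ℓ2 n := lp.single 2 a (1 : ℂ) with hφ
    have hφnorm : ‖φ‖ = 1 := by
      rw [hφ]
      have := lp.norm_single (E := fun _ : Fin n → ℤ => ℂ) (p := 2) (by norm_num) a (1:ℂ)
      simpa using this
    have hfix : (T ℏN) φ = φ := by
      apply lp.ext
      funext b
      rw [hT ℏN hℏN φ b, sub_zero]
      by_cases hb : b = a
      · rw [hc b]
        have hb0 : (b ⟨0, hn⟩ : ℝ) = N := by rw [hb]; simp [ha]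
        rw [Real.sin_add_int_mul_two_pi, hb0]
        have hq : π * (N:ℝ) / (2 * N) = π / 2 := by
          field_simp
        rw [hq, Real.sin_pi_div_two]
        simp
      · have hz : φ b = 0 := by
          rw [hφ]; exact lp.single_apply_ne (E := fun _ : Fin n → ℤ => ℂ) 2 a (1:ℂ) hb
        rw [hz, mul_zero]
    have hlb : (1:ℝ) ≤ ‖T ℏN‖ := by
      have := ContinuousLinearMap.le_opNorm (T ℏN) φ
      rw [hfix, hφnorm, mul_one] at this
      exact this
    linarith
  refine ⟨h1, by rw [h1, norm_zero], h2, ?_⟩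
  intro hcont
  have h0 : ‖T ℏ₀‖ = 0 := by rw [h1, norm_zero]
  set x : ℕ → ℝ := fun N => ℏ₀ * (1 + 1 / (4 * (N : ℝ))) with hx
  have hxmem : ∀ N, x N ∈ Set.Ioi (0:ℝ) := by
    intro N
    have : (0:ℝ) ≤ 1 / (4 * (N:ℝ)) := by positivity
    simp only [hx, Set.mem_Ioi]
    nlinarith
  have hxtend : Tendsto x atTop (nhds ℏ₀) := by
    have h4 : Tendsto (fun N : ℕ => 1 / (4 * (N : ℝ))) atTop (nhds 0) := by
      apply Tendsto.div_atTop tendsto_const_nhds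
      exact (tendsto_natCast_atTop_atTop).const_mul_atTop (by norm_num)
    have h5 := (tendsto_const_nhds.add h4).const_mul ℏ₀ (f := fun N : ℕ => 1 + 1 / (4 * (N:ℝ)))
    have he : ℏ₀ * ((1:ℝ) + 0) = ℏ₀ := by ring
    rw [he] at h5
    exact h5
  have hxtend' : Tendsto x atTop (nhdsWithin ℏ₀ (Set.Ioi 0)) :=
    tendsto_nhdsWithin_of_tendsto_nhds_of_eventually_within x hxtend
      (Eventually.of_forall hxmem)
  have hlim : Tendsto (fun N => ‖T (x N)‖) atTop (nhds 0) := by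
    have := hcont.tendsto.comp hxtend'
    rwa [h0] at this
  have hone : ∀ᶠ N in atTop, ‖T (x N)‖ = 1 := by
    filter_upwards [eventually_ge_atTop 1] with N hN
    exact h2 N hN
  have : Tendsto (fun _ : ℕ => (1:ℝ)) atTop (nhds 0) := hlim.congr' hone
  have := tendsto_nhds_unique this tendsto_const_nhds
  norm_num at this
end
end

section
/- (Lower half of Rieffel's condition.) Let m ≥ 1, let k_1, …, k_m ∈ ℤⁿ, and let h_1, …, h_m : ℝⁿ → ℂ be bounded and uniformly continuous. Then for every ε > 0 there exists ℏ₂ > 0 such that for every ℏ ∈ (0, ℏ₂], sup_{x ∈ ℝⁿ, p ∈ ℝⁿ} | Σ_{j=1}^m e^{2πi k_j·x} h_j(p) | < ‖ Σ_{j=1}^m T_{k_j,h_j,ℏ} ‖ + ε, where the norm is the operator norm on ℓ²(ℤⁿ). -/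
open scoped Real
open Filter MeasureTheory

noncomputable section

open scoped ENNReal

lemma bern (N d : ℝ) (n : ℕ) (hdN : d ≤ N) (h0 : 0 < N) :
    N^n - n*d*N^(n-1) ≤ (N - d)^n := by
  rcases n with _ | nn
  · simp
  · have hdiv : d / N ≤ 1 := (div_le_one h0).mpr hdN
    have hx : (-2:ℝ) ≤ -(d/N) := by linarith
    have hb := one_add_mul_le_pow hx (nn+1)
    have hmul := mul_le_mul_of_nonneg_right hb (pow_nonneg h0.le (nn+1))
    have e1 : (1 + -(d/N))^(nn+1) * N^(nn+1) = (N - d)^(nn+1) := by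
      rw [← mul_pow]; congr 1; field_simp; ring
    have e2 : (1 + ((nn+1:ℕ):ℝ) * (-(d/N))) * N^(nn+1) = N^(nn+1) - (nn+1)*d*N^nn := by
      have : (N:ℝ)^(nn+1) = N^nn * N := pow_succ N nn
      rw [this]; field_simp; push_cast; ring
    calc N^(nn+1) - ((nn+1:ℕ):ℝ)*d*N^(nn+1-1)
        = (1 + ((nn+1:ℕ):ℝ) * (-(d/N))) * N^(nn+1) := by
          simp only [Nat.add_sub_cancel]; rw [e2]; push_cast; ring
      _ ≤ (1 + -(d/N))^(nn+1) * N^(nn+1) := hmul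
      _ = (N - d)^(nn+1) := e1

lemma phase_mul (n : ℕ) (x : Fin n → ℝ) (kk a : Fin n → ℤ) :
    (starRingEnd ℂ) (Complex.exp ((↑(-(2*π* ∑ i, x i * (a i:ℝ))):ℂ) * Complex.I)) *
      Complex.exp ((↑(-(2*π* ∑ i, x i * (((a - kk) i : ℤ):ℝ))):ℂ) * Complex.I)
    = Complex.exp (2 * π * Complex.I * ((∑ i, (kk i : ℝ) * x i : ℝ) : ℂ)) := by
  rw [← Complex.exp_conj, ← Complex.exp_add]
  congr 1
  have hs : ∑ i, x i * (((a - kk) i : ℤ):ℝ)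
      = ∑ i, x i * (a i:ℝ) - ∑ i, (kk i:ℝ) * x i := by
    rw [← Finset.sum_sub_distrib]
    refine Finset.sum_congr rfl fun i _ => ?_
    simp only [Pi.sub_apply]; push_cast; ring
  rw [hs]
  simp only [map_mul, Complex.conj_ofReal, Complex.conj_I]
  push_cast
  ring

lemma single_apply' {n : ℕ} (a : Fin n → ℤ) (v : ℂ) (b : Fin n → ℤ) :
    ((lp.single 2 a v : ℓ2 n) : ∀ _ : Fin n → ℤ, ℂ) b = if b = a then v else 0 := by
  by_cases hba : b = a
  · subst hba; simp [lp.single_apply_self]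
  · rw [if_neg hba]; exact lp.single_apply_ne (E := fun _ : Fin n → ℤ => ℂ) 2 a v hba

lemma sum_single_apply {n : ℕ} (Q : Finset (Fin n → ℤ)) (c : (Fin n → ℤ) → ℂ)
    (b : Fin n → ℤ) :
    ((∑ a ∈ Q, lp.single 2 a (c a) : ℓ2 n) : ∀ _ : Fin n → ℤ, ℂ) b
      = if b ∈ Q then c b else 0 := by
  classical
  rw [lp.coeFn_sum, Finset.sum_apply]
  rw [Finset.sum_congr rfl (fun a _ => single_apply' a (c a) b)]
  exact Finset.sum_ite_eq Q b c

lemma sum_single_normsq {n : ℕ} (Q : Finset (Fin n → ℤ)) (c : (Fin n → ℤ) → ℂ)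
    (hc : ∀ a ∈ Q, ‖c a‖ = 1) :
    ‖(∑ a ∈ Q, lp.single 2 a (c a) : ℓ2 n)‖ ^ 2 = (Q.card : ℝ) := by
  have h := lp.norm_sum_single (p := 2) (E := fun _ : Fin n → ℤ => ℂ) (by norm_num) c Q
  have h2 : (2:ℝ≥0∞).toReal = (2:ℝ) := by norm_num
  rw [h2] at h
  have hsum : ∑ a ∈ Q, ‖c a‖ ^ (2:ℝ) = (Q.card : ℝ) := by
    rw [Finset.sum_congr rfl (fun a ha => by rw [hc a ha, Real.one_rpow])]
    simp
  rw [hsum] at h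
  have hnat := Real.rpow_natCast ‖(∑ a ∈ Q, lp.single 2 a (c a) : ℓ2 n)‖ 2
  rw [← h, ← hnat]; norm_num

lemma inner_sum_single {n : ℕ} (Q : Finset (Fin n → ℤ)) (c : (Fin n → ℤ) → ℂ)
    (g : ℓ2 n) :
    (inner ℂ (∑ a ∈ Q, lp.single 2 a (c a) : ℓ2 n) g : ℂ)
      = ∑ a ∈ Q, (starRingEnd ℂ) (c a) * g a := by
  classical
  rw [sum_inner]
  exact Finset.sum_congr rfl fun a _ => by rw [lp.inner_single_left, RCLike.inner_apply, mul_comm]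

set_option maxHeartbeats 1000000 in
/-- Lower half of Rieffel's condition: for small ℏ > 0,
sup_{x,p} |Σ_j e^{2πi k_j·x} h_j(p)| < ‖Σ_j T_{k_j,h_j,ℏ}‖ + ε. -/
theorem stmt_18 (n : ℕ) (hn : 1 ≤ n) (m : ℕ) (hm : 1 ≤ m)
    (k : Fin m → Fin n → ℤ) (h : Fin m → (Fin n → ℝ) → ℂ)
    (hbd : ∀ j, ∃ C : ℝ, ∀ p, ‖h j p‖ ≤ C)
    (huc : ∀ j, UniformContinuous (h j))
    (T : ℝ → Fin m → (ℓ2 n →L[ℂ] ℓ2 n))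
    (hT : ∀ ℏ : ℝ, 0 < ℏ → ∀ (j : Fin m) (φ : ℓ2 n) (a : Fin n → ℤ),
      ((T ℏ j) φ) a = h j (fun i => π * ℏ * (2 * (a i : ℝ) - (k j i : ℝ))) * φ (a - k j)) :
    ∀ ε : ℝ, 0 < ε → ∃ ℏ₂ : ℝ, 0 < ℏ₂ ∧ ∀ ℏ : ℝ, 0 < ℏ → ℏ ≤ ℏ₂ →
      (⨆ x : Fin n → ℝ, ⨆ p : Fin n → ℝ, ‖(∑ j,
        Complex.exp (2 * π * Complex.I * ((∑ i, (k j i : ℝ) * x i : ℝ) : ℂ)) * h j p)‖)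
        < ‖∑ j, T ℏ j‖ + ε := by
  classical
  intro ε hε
  choose C hC using hbd
  have hC0 : ∀ j, 0 ≤ C j := fun j => le_trans (norm_nonneg _) (hC j 0)
  have hm' : (0:ℝ) < m := by exact_mod_cast hm
  set G : (Fin n → ℝ) → (Fin n → ℝ) → ℝ := fun x p => ‖(∑ j,
      Complex.exp (2 * π * Complex.I * ((∑ i, (k j i : ℝ) * x i : ℝ) : ℂ)) * h j p)‖
    with hG
  -- pick near-optimal (x₀, p₀)
  obtain ⟨x₀, hx₀⟩ := exists_lt_of_lt_ciSup
    (sub_lt_self (⨆ x, ⨆ p, G x p) (by positivity : (0:ℝ) < ε/4))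
  obtain ⟨p₀, hp₀⟩ := exists_lt_of_lt_ciSup
    (sub_lt_self (⨆ p, G x₀ p) (by positivity : (0:ℝ) < ε/4))
  have hS : (⨆ x, ⨆ p, G x p) < G x₀ p₀ + ε/2 := by linarith
  -- uniform continuity data
  set ε' := ε / (4 * m) with hε'def
  have hε' : 0 < ε' := by positivity
  choose δf hδf0 hδfC using fun j => Metric.uniformContinuous_iff.mp (huc j) ε' hε'
  have hmne : (Finset.univ : Finset (Fin m)).Nonempty := ⟨⟨0, hm⟩, Finset.mem_univ _⟩
  set δ := Finset.univ.inf' hmne δf with hδdef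
  have hδ0 : 0 < δ := (Finset.lt_inf'_iff hmne).mpr fun j _ => hδf0 j
  have hδle : ∀ j, δ ≤ δf j := fun j => Finset.inf'_le _ (Finset.mem_univ j)
  -- bound on the k's
  set K : ℕ := ∑ j, ∑ i, (k j i).natAbs with hKdef
  have hK : ∀ j i, |k j i| ≤ (K:ℤ) := by
    intro j i
    have h1 : (k j i).natAbs ≤ ∑ i', (k j i').natAbs :=
      Finset.single_le_sum (f := fun i' => (k j i').natAbs)
        (fun _ _ => Nat.zero_le _) (Finset.mem_univ i)
    have h2 : (∑ i', (k j i').natAbs) ≤ K :=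
      Finset.single_le_sum (f := fun j' => ∑ i', (k j' i').natAbs)
        (fun _ _ => Nat.zero_le _) (Finset.mem_univ j)
    rw [Int.abs_eq_natAbs]
    exact_mod_cast le_trans h1 h2
  set Cs := ∑ j, C j with hCsdef
  have hCs0 : 0 ≤ Cs := Finset.sum_nonneg fun j _ => hC0 j
  -- choose N
  set N : ℕ := 2*K + 1 + ⌈(16*(K:ℝ)*(n:ℝ)*Cs)/ε⌉₊ with hNdef
  have hN0 : 0 < N := by omega
  have hN0' : (0:ℝ) < N := by exact_mod_cast hN0
  have h2K : 2*(K:ℝ) < (N:ℝ) := by exact_mod_cast (by omega : (2*K:ℕ) < N)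
  have hNbig : 2*(K:ℝ)*(n:ℝ)*Cs ≤ ε/8 * N := by
    have h1 : (16*(K:ℝ)*(n:ℝ)*Cs)/ε ≤ (⌈(16*(K:ℝ)*(n:ℝ)*Cs)/ε⌉₊ : ℝ) := Nat.le_ceil _
    have h2 : ((⌈(16*(K:ℝ)*(n:ℝ)*Cs)/ε⌉₊ : ℕ) : ℝ) ≤ (N:ℝ) := by
      exact_mod_cast (by omega : ⌈(16*(K:ℝ)*(n:ℝ)*Cs)/ε⌉₊ ≤ N)
    have h3 : (16*(K:ℝ)*(n:ℝ)*Cs)/ε ≤ (N:ℝ) := le_trans h1 h2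
    calc 2*(K:ℝ)*(n:ℝ)*Cs = ε/8 * ((16*(K:ℝ)*(n:ℝ)*Cs)/ε) := by field_simp; ring
      _ ≤ ε/8 * N := by
          apply mul_le_mul_of_nonneg_left h3 (by positivity)
  -- choose ℏ₂
  refine ⟨δ / (4*π*((N:ℝ)+(K:ℝ)+1)), by positivity, ?_⟩
  intro ℏ hℏ0 hℏle
  show (⨆ x, ⨆ p, G x p) < ‖∑ j, T ℏ j‖ + ε
  set A := ∑ j, T ℏ j with hA
  -- it suffices to bound G x₀ p₀
  suffices hF : G x₀ p₀ ≤ ‖A‖ + 3*ε/8 by linarith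
  -- the cube
  set a₀ : Fin n → ℤ := fun i => ⌊p₀ i / (2*π*ℏ)⌋ with ha₀
  set bb : Fin n → ℤ := fun i => a₀ i + ((N:ℤ) - 1) with hbb
  set Q : Finset (Fin n → ℤ) := Finset.Icc a₀ bb with hQ
  have hcardQ : Q.card = N^n := by
    rw [hQ, Pi.card_Icc]
    have hc : ∀ i : Fin n, (Finset.Icc (a₀ i) (bb i)).card = N := by
      intro i
      rw [Int.card_Icc]
      simp only [hbb]
      omega
    rw [Finset.prod_congr rfl (fun i _ => hc i), Finset.prod_const, Finset.card_univ,
      Fintype.card_fin]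
  have hπ := Real.pi_pos
  have hπℏ : 0 < π * ℏ := mul_pos hπ hℏ0
  -- rounding estimate
  have hround : ∀ i, |2*π*ℏ*((a₀ i : ℤ) : ℝ) - p₀ i| ≤ 2*π*ℏ := by
    intro i
    have h2πℏ : (0:ℝ) < 2*π*ℏ := by positivity
    have h1 : ((⌊p₀ i / (2*π*ℏ)⌋ : ℤ) : ℝ) ≤ p₀ i / (2*π*ℏ) := Int.floor_le _
    have h2 : p₀ i / (2*π*ℏ) < (⌊p₀ i / (2*π*ℏ)⌋ : ℤ) + 1 := Int.lt_floor_add_one _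
    have ht : p₀ i / (2*π*ℏ) * (2*π*ℏ) = p₀ i := div_mul_cancel₀ _ h2πℏ.ne'
    have h1' := mul_le_mul_of_nonneg_right h1 h2πℏ.le
    have h2' := mul_lt_mul_of_pos_right h2 h2πℏ
    rw [ht] at h1' h2'
    simp only [ha₀]
    rw [abs_le]
    constructor <;> linarith
  -- distance estimate
  have hdist : ∀ (j : Fin m) (a : Fin n → ℤ), a ∈ Q →
      dist (fun i => π * ℏ * (2 * ((a i : ℤ) : ℝ) - ((k j i : ℤ) : ℝ))) p₀ < δ := by
    intro j a ha
    have ha' : a ∈ Finset.Icc a₀ bb := by rwa [hQ] at ha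
    have hmem := Finset.mem_Icc.mp ha'
    simp only [Pi.le_def] at hmem
    have hb : dist (fun i => π * ℏ * (2 * ((a i : ℤ) : ℝ) - ((k j i : ℤ) : ℝ))) p₀ ≤ δ/2 := by
      rw [dist_pi_le_iff (by positivity)]
      intro i
      rw [Real.dist_eq]
      have hlo := hmem.1 i
      have hhi := hmem.2 i
      simp only [hbb] at hhi
      have h1 : ((a₀ i : ℤ) : ℝ) ≤ ((a i : ℤ) : ℝ) := by exact_mod_cast hlo
      have h2 : ((a i : ℤ) : ℝ) ≤ ((a₀ i : ℤ) : ℝ) + (N:ℝ) - 1 := by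
        have : (a i : ℝ) ≤ ((a₀ i + ((N:ℤ) - 1) : ℤ) : ℝ) := by exact_mod_cast hhi
        push_cast at this
        linarith
      have h3 := hround i
      have h4 : |((k j i : ℤ) : ℝ)| ≤ (K:ℝ) := by
        have := hK j i
        calc |((k j i : ℤ) : ℝ)| = ((|k j i| : ℤ) : ℝ) := by push_cast; simp
          _ ≤ (K:ℝ) := by exact_mod_cast this
      have h5 : ℏ * (4*π*((N:ℝ)+(K:ℝ)+1)) ≤ δ :=
        (le_div_iff₀ (by positivity)).mp hℏle
      rw [abs_le] at h3 h4 ⊢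
      have hkK : (0:ℝ) ≤ π*ℏ*(K:ℝ) := by positivity
      constructor <;> nlinarith [mul_le_mul_of_nonneg_left (sub_le_iff_le_add.mpr
        (by linarith : ((a i : ℤ) : ℝ) ≤ ((N:ℝ) - 1) + ((a₀ i : ℤ) : ℝ))) hπℏ.le,
        mul_nonneg hπℏ.le (by linarith : (0:ℝ) ≤ ((a i : ℤ) : ℝ) - ((a₀ i : ℤ) : ℝ)),
        mul_le_mul_of_nonneg_left h4.2 hπℏ.le,
        mul_le_mul_of_nonneg_left (neg_le.mp h4.1) hπℏ.le]
    linarith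
  -- closeness of h values
  have hclose : ∀ (j : Fin m) (a : Fin n → ℤ), a ∈ Q →
      ‖(h j (fun i => π * ℏ * (2 * ((a i : ℤ) : ℝ) - ((k j i : ℤ) : ℝ))) - h j p₀)‖
        ≤ ε' := by
    intro j a ha
    have := hδfC j (lt_of_lt_of_le (hdist j a ha) (hδle j))
    rw [Complex.dist_eq] at this
    exact this.le
  -- the shifted index sets
  set R : Fin m → Finset (Fin n → ℤ) := fun j => Q.filter (fun a => a - k j ∈ Q) with hR
  have hRsub : ∀ j, R j ⊆ Q := fun j => Finset.filter_subset _ _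
  have hRle : ∀ j, ((R j).card : ℝ) ≤ (N:ℝ)^n := by
    intro j
    have := Finset.card_le_card (hRsub j)
    rw [hcardQ] at this
    exact_mod_cast this
  have hRge : ∀ j, (N:ℝ)^n - 2*(K:ℝ)*(n:ℝ)*(N:ℝ)^(n-1) ≤ ((R j).card : ℝ) := by
    intro j
    have hsub : Finset.Icc (fun i => a₀ i + (K:ℤ)) (fun i => bb i - (K:ℤ)) ⊆ R j := by
      intro a ha
      rw [Finset.mem_Icc] at ha
      obtain ⟨hlo, hhi⟩ := ha
      simp only [Pi.le_def] at hlo hhi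
      simp only [hR]
      rw [Finset.mem_filter]
      have hKb := fun i => abs_le.mp (hK j i)
      constructor
      · rw [hQ, Finset.mem_Icc]
        refine ⟨?_, ?_⟩ <;> (rw [Pi.le_def]; intro i)
        · have h1 := hlo i
          have h3 := hKb i
          omega
        · have h2 := hhi i
          have h3 := hKb i
          omega
      · rw [hQ, Finset.mem_Icc]
        refine ⟨?_, ?_⟩ <;> (rw [Pi.le_def]; intro i)
        · show a₀ i ≤ a i - k j i
          have h1 := hlo i
          have h3 := hKb i
          omega
        · show a i - k j i ≤ bb i
          have h2 := hhi i
          have h3 := hKb i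
          omega
    have hcard2 : (Finset.Icc (fun i => a₀ i + (K:ℤ)) (fun i => bb i - (K:ℤ))).card
        = ((N:ℤ) - 2*K).toNat ^ n := by
      rw [Pi.card_Icc]
      have hc : ∀ i : Fin n, (Finset.Icc ((fun i => a₀ i + (K:ℤ)) i) ((fun i => bb i - (K:ℤ)) i)).card
          = ((N:ℤ) - 2*K).toNat := by
        intro i
        rw [Int.card_Icc]
        simp only [hbb]
        omega
      rw [Finset.prod_congr rfl (fun i _ => hc i), Finset.prod_const, Finset.card_univ,
        Fintype.card_fin]
    have hcast : ((((N:ℤ) - 2*K).toNat : ℕ) : ℝ) = (N:ℝ) - 2*(K:ℝ) := by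
      have h1 : ((((N:ℤ) - 2*K).toNat : ℕ) : ℤ) = (N:ℤ) - 2*K := Int.toNat_of_nonneg (by
        have : (2*K:ℕ) < N := by omega
        omega)
      exact_mod_cast h1
    have hge : (((N:ℤ) - 2*K).toNat ^ n : ℝ) ≤ ((R j).card : ℝ) := by
      have := Finset.card_le_card hsub
      rw [hcard2] at this
      exact_mod_cast this
    have hbern := bern (N:ℝ) (2*(K:ℝ)) n (by linarith) hN0'
    push_cast at hge
    rw [hcast] at hge
    calc (N:ℝ)^n - 2*(K:ℝ)*(n:ℝ)*(N:ℝ)^(n-1)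
        = (N:ℝ)^n - (n:ℝ)*(2*(K:ℝ))*(N:ℝ)^(n-1) := by ring
      _ ≤ ((N:ℝ) - 2*(K:ℝ))^n := hbern
      _ ≤ ((R j).card : ℝ) := hge
  -- per-j estimate
  have hest : ∀ j, ‖((∑ a ∈ R j,
        h j (fun i => π * ℏ * (2 * ((a i : ℤ) : ℝ) - ((k j i : ℤ) : ℝ)))) - ((N:ℝ)^n : ℝ) * h j p₀)‖
      ≤ (N:ℝ)^n * ε' + 2*(K:ℝ)*(n:ℝ)*(N:ℝ)^(n-1) * C j := by
    intro j
    have hsplit : (∑ a ∈ R j, h j (fun i => π * ℏ * (2 * ((a i : ℤ) : ℝ) - ((k j i : ℤ) : ℝ))))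
          - ((N:ℝ)^n : ℝ) * h j p₀
        = (∑ a ∈ R j, (h j (fun i => π * ℏ * (2 * ((a i : ℤ) : ℝ) - ((k j i : ℤ) : ℝ))) - h j p₀))
          + ((((R j).card : ℝ) : ℂ) - (((N:ℝ)^n : ℝ) : ℂ)) * h j p₀ := by
      rw [Finset.sum_sub_distrib, Finset.sum_const, nsmul_eq_mul]
      push_cast
      ring
    rw [hsplit]
    refine le_trans (norm_add_le _ _) ?_
    have t1 : ‖(∑ a ∈ R j,
        (h j (fun i => π * ℏ * (2 * ((a i : ℤ) : ℝ) - ((k j i : ℤ) : ℝ))) - h j p₀))‖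
        ≤ ((R j).card : ℝ) * ε' := by
      refine le_trans (norm_sum_le _ _) ?_
      calc ∑ a ∈ R j, ‖
            (h j (fun i => π * ℏ * (2 * ((a i : ℤ) : ℝ) - ((k j i : ℤ) : ℝ))) - h j p₀)‖
          ≤ ∑ _a ∈ R j, ε' := Finset.sum_le_sum (fun a ha => hclose j a (hRsub j ha))
        _ = ((R j).card : ℝ) * ε' := by rw [Finset.sum_const, nsmul_eq_mul]
    have t2 : ‖(((((R j).card : ℝ) : ℂ) - (((N:ℝ)^n : ℝ) : ℂ)) * h j p₀)‖
        ≤ ((N:ℝ)^n - ((R j).card : ℝ)) * C j := by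
      rw [norm_mul]
      have e1 : ‖((((R j).card : ℝ) : ℂ) - (((N:ℝ)^n : ℝ) : ℂ))‖
          = (N:ℝ)^n - ((R j).card : ℝ) := by
        rw [← Complex.ofReal_sub, Complex.norm_real, Real.norm_eq_abs, abs_of_nonpos (by linarith [hRle j])]
        ring
      rw [e1]
      exact mul_le_mul_of_nonneg_left (hC j p₀) (by linarith [hRle j])
    have t3 : ((R j).card : ℝ) * ε' ≤ (N:ℝ)^n * ε' :=
      mul_le_mul_of_nonneg_right (hRle j) hε'.le
    have t4 : ((N:ℝ)^n - ((R j).card : ℝ)) * C j ≤ 2*(K:ℝ)*(n:ℝ)*(N:ℝ)^(n-1) * C j :=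
      mul_le_mul_of_nonneg_right (by linarith [hRge j]) (hC0 j)
    linarith
  -- the trial vector
  set ph : (Fin n → ℤ) → ℂ :=
    fun a => Complex.exp ((↑(-(2*π* ∑ i, x₀ i * ((a i : ℤ):ℝ))):ℂ) * Complex.I) with hph
  set φ : ℓ2 n := ∑ a ∈ Q, lp.single 2 a (ph a) with hφdef
  have hφsq : ‖φ‖^2 = (N:ℝ)^n := by
    rw [hφdef, sum_single_normsq Q ph (fun a _ => by
      rw [hph]
      exact Complex.norm_exp_ofReal_mul_I _)]
    rw [hcardQ]
    push_cast
    ring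
  -- pointwise formula for A φ
  have hAφ : ∀ a : Fin n → ℤ, ((A φ : ℓ2 n) : ∀ _ : Fin n → ℤ, ℂ) a
      = ∑ j, h j (fun i => π * ℏ * (2 * ((a i : ℤ) : ℝ) - ((k j i : ℤ) : ℝ)))
          * (if a - k j ∈ Q then ph (a - k j) else 0) := by
    intro a
    have h1 : A φ = ∑ j, (T ℏ j) φ := by
      rw [hA]; exact ContinuousLinearMap.sum_apply _ _ _
    rw [h1, lp.coeFn_sum, Finset.sum_apply]
    refine Finset.sum_congr rfl fun j _ => ?_
    rw [hT ℏ hℏ0 j φ a]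
    congr 1
    rw [hφdef]
    exact sum_single_apply Q ph (a - k j)
  -- the inner product
  have hinner : (inner ℂ φ (A φ) : ℂ) = ∑ j,
      Complex.exp (2 * π * Complex.I * ((∑ i, (k j i : ℝ) * x₀ i : ℝ) : ℂ))
        * ∑ a ∈ R j, h j (fun i => π * ℏ * (2 * ((a i : ℤ) : ℝ) - ((k j i : ℤ) : ℝ))) := by
    rw [hφdef, inner_sum_single Q ph (A φ)]
    rw [Finset.sum_congr rfl (fun a _ => by rw [hAφ a])]
    rw [Finset.sum_congr rfl (fun a _ => Finset.mul_sum _ _ _)]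
    rw [Finset.sum_comm]
    refine Finset.sum_congr rfl fun j _ => ?_
    have e1 : ∀ a ∈ Q, (starRingEnd ℂ) (ph a) *
        (h j (fun i => π * ℏ * (2 * ((a i : ℤ) : ℝ) - ((k j i : ℤ) : ℝ)))
          * (if a - k j ∈ Q then ph (a - k j) else 0))
        = if a - k j ∈ Q then
            Complex.exp (2 * π * Complex.I * ((∑ i, (k j i : ℝ) * x₀ i : ℝ) : ℂ))
              * h j (fun i => π * ℏ * (2 * ((a i : ℤ) : ℝ) - ((k j i : ℤ) : ℝ)))
          else 0 := by
      intro a _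
      by_cases hc : a - k j ∈ Q
      · rw [if_pos hc, if_pos hc]
        have hp := phase_mul n x₀ (k j) a
        calc (starRingEnd ℂ) (ph a) *
            (h j (fun i => π * ℏ * (2 * ((a i : ℤ) : ℝ) - ((k j i : ℤ) : ℝ))) * ph (a - k j))
            = ((starRingEnd ℂ) (ph a) * ph (a - k j))
              * h j (fun i => π * ℏ * (2 * ((a i : ℤ) : ℝ) - ((k j i : ℤ) : ℝ))) := by ring
          _ = _ := by rw [hph]; rw [hp]
      · rw [if_neg hc, if_neg hc, mul_zero, mul_zero]
    have hRj : R j = Q.filter (fun a => a - k j ∈ Q) := by simp only [hR]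
    rw [Finset.sum_congr rfl e1, ← Finset.sum_filter, ← hRj]
    rw [Finset.mul_sum]
  -- norm bound on the inner product
  have key2 : ‖(inner ℂ φ (A φ) : ℂ)‖ ≤ ‖A‖ * (N:ℝ)^n := by
    calc ‖(inner ℂ φ (A φ) : ℂ)‖ = ‖(inner ℂ φ (A φ) : ℂ)‖ := rfl
      _ ≤ ‖φ‖ * ‖A φ‖ := norm_inner_le_norm _ _
      _ ≤ ‖φ‖ * (‖A‖ * ‖φ‖) :=
          mul_le_mul_of_nonneg_left (A.le_opNorm φ) (norm_nonneg φ)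
      _ = ‖A‖ * ‖φ‖^2 := by ring
      _ = ‖A‖ * (N:ℝ)^n := by rw [hφsq]
  -- error bound
  have key1 : ‖((inner ℂ φ (A φ) : ℂ) - ((N:ℝ)^n : ℝ) * ∑ j,
      Complex.exp (2 * π * Complex.I * ((∑ i, (k j i : ℝ) * x₀ i : ℝ) : ℂ)) * h j p₀)‖
      ≤ (N:ℝ)^n * (ε/4) + ε/8 * (N:ℝ)^n := by
    rw [hinner]
    have e2 : (∑ j, Complex.exp (2 * π * Complex.I * ((∑ i, (k j i : ℝ) * x₀ i : ℝ) : ℂ))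
          * ∑ a ∈ R j, h j (fun i => π * ℏ * (2 * ((a i : ℤ) : ℝ) - ((k j i : ℤ) : ℝ))))
        - ((N:ℝ)^n : ℝ) * ∑ j,
            Complex.exp (2 * π * Complex.I * ((∑ i, (k j i : ℝ) * x₀ i : ℝ) : ℂ)) * h j p₀
        = ∑ j, Complex.exp (2 * π * Complex.I * ((∑ i, (k j i : ℝ) * x₀ i : ℝ) : ℂ))
            * ((∑ a ∈ R j, h j (fun i => π * ℏ * (2 * ((a i : ℤ) : ℝ) - ((k j i : ℤ) : ℝ))))
               - ((N:ℝ)^n : ℝ) * h j p₀) := by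
      rw [Finset.mul_sum, ← Finset.sum_sub_distrib]
      exact Finset.sum_congr rfl fun j _ => by ring
    rw [e2]
    refine le_trans (norm_sum_le _ _) ?_
    have e3 : ∀ j : Fin m, ‖
        (Complex.exp (2 * π * Complex.I * ((∑ i, (k j i : ℝ) * x₀ i : ℝ) : ℂ))
          * ((∑ a ∈ R j, h j (fun i => π * ℏ * (2 * ((a i : ℤ) : ℝ) - ((k j i : ℤ) : ℝ))))
             - ((N:ℝ)^n : ℝ) * h j p₀))‖
        ≤ (N:ℝ)^n * ε' + 2*(K:ℝ)*(n:ℝ)*(N:ℝ)^(n-1) * C j := by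
      intro j
      rw [norm_mul]
      have habs1 : ‖
          (Complex.exp (2 * π * Complex.I * ((∑ i, (k j i : ℝ) * x₀ i : ℝ) : ℂ)))‖ = 1 := by
        rw [Complex.norm_exp]
        have : (2 * π * Complex.I * ((∑ i, (k j i : ℝ) * x₀ i : ℝ) : ℂ)).re = 0 := by
          simp [Complex.mul_re, Complex.mul_im]
        rw [this, Real.exp_zero]
      rw [habs1, one_mul]
      exact hest j
    calc ∑ j, ‖
          (Complex.exp (2 * π * Complex.I * ((∑ i, (k j i : ℝ) * x₀ i : ℝ) : ℂ))
            * ((∑ a ∈ R j, h j (fun i => π * ℏ * (2 * ((a i : ℤ) : ℝ) - ((k j i : ℤ) : ℝ))))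
               - ((N:ℝ)^n : ℝ) * h j p₀))‖
        ≤ ∑ j, ((N:ℝ)^n * ε' + 2*(K:ℝ)*(n:ℝ)*(N:ℝ)^(n-1) * C j) :=
          Finset.sum_le_sum fun j _ => e3 j
      _ = (m:ℝ) * ((N:ℝ)^n * ε') + 2*(K:ℝ)*(n:ℝ)*(N:ℝ)^(n-1) * Cs := by
          rw [Finset.sum_add_distrib, Finset.sum_const, ← Finset.mul_sum, Finset.card_univ,
            Fintype.card_fin, nsmul_eq_mul, hCsdef]
      _ ≤ (N:ℝ)^n * (ε/4) + ε/8 * (N:ℝ)^n := by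
          have hn1 : n - 1 + 1 = n := by omega
          have hpow : (N:ℝ)^(n-1) * (N:ℝ) = (N:ℝ)^n := by
            rw [← pow_succ, hn1]
          have hme : (m:ℝ) * ε' = ε/4 := by
            rw [hε'def]; field_simp
          have h1 : (m:ℝ) * ((N:ℝ)^n * ε') = (N:ℝ)^n * (ε/4) := by
            rw [← hme]; ring
          have h2 : 2*(K:ℝ)*(n:ℝ)*(N:ℝ)^(n-1) * Cs ≤ ε/8 * (N:ℝ)^n := by
            have := mul_le_mul_of_nonneg_right hNbig
              (pow_nonneg hN0'.le (n-1) : (0:ℝ) ≤ (N:ℝ)^(n-1))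
            calc 2*(K:ℝ)*(n:ℝ)*(N:ℝ)^(n-1) * Cs
                = (2*(K:ℝ)*(n:ℝ)*Cs) * (N:ℝ)^(n-1) := by ring
              _ ≤ (ε/8 * (N:ℝ)) * (N:ℝ)^(n-1) := this
              _ = ε/8 * (N:ℝ)^n := by rw [mul_assoc, mul_comm ((N:ℝ)) ((N:ℝ)^(n-1)), hpow]
          linarith
  -- conclusion
  have hNn : (0:ℝ) < (N:ℝ)^n := pow_pos hN0' n
  have hGx : G x₀ p₀ = ‖(∑ j,
      Complex.exp (2 * π * Complex.I * ((∑ i, (k j i : ℝ) * x₀ i : ℝ) : ℂ)) * h j p₀)‖ := by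
    rw [hG]
  set Fc : ℂ := ∑ j,
      Complex.exp (2 * π * Complex.I * ((∑ i, (k j i : ℝ) * x₀ i : ℝ) : ℂ)) * h j p₀ with hFc
  have tri : ‖((((N:ℝ)^n : ℝ) : ℂ) * Fc)‖
      ≤ ‖(inner ℂ φ (A φ) : ℂ)‖
        + ‖((inner ℂ φ (A φ) : ℂ) - (((N:ℝ)^n : ℝ) : ℂ) * Fc)‖ := by
    calc ‖((((N:ℝ)^n : ℝ) : ℂ) * Fc)‖
        = ‖((inner ℂ φ (A φ) : ℂ)
            + -((inner ℂ φ (A φ) : ℂ) - (((N:ℝ)^n : ℝ) : ℂ) * Fc))‖ := by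
          congr 1; ring
      _ ≤ ‖(inner ℂ φ (A φ) : ℂ)‖
          + ‖(-((inner ℂ φ (A φ) : ℂ) - (((N:ℝ)^n : ℝ) : ℂ) * Fc))‖ :=
          norm_add_le _ _
      _ = ‖(inner ℂ φ (A φ) : ℂ)‖
          + ‖((inner ℂ φ (A φ) : ℂ) - (((N:ℝ)^n : ℝ) : ℂ) * Fc)‖ := by
          rw [norm_neg]

  have habs : ‖((((N:ℝ)^n : ℝ) : ℂ) * Fc)‖ = (N:ℝ)^n * ‖Fc‖ := by
    rw [norm_mul, Complex.norm_real, Real.norm_eq_abs, abs_of_pos hNn]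
  have hbig : (N:ℝ)^n * ‖Fc‖ ≤ (N:ℝ)^n * (‖A‖ + 3*ε/8) := by
    rw [← habs]
    calc ‖((((N:ℝ)^n : ℝ) : ℂ) * Fc)‖
        ≤ ‖(inner ℂ φ (A φ) : ℂ)‖
          + ‖((inner ℂ φ (A φ) : ℂ) - (((N:ℝ)^n : ℝ) : ℂ) * Fc)‖ := tri
      _ ≤ ‖A‖ * (N:ℝ)^n + ((N:ℝ)^n * (ε/4) + ε/8 * (N:ℝ)^n) := by
          refine add_le_add key2 ?_
          have := key1
          calc ‖((inner ℂ φ (A φ) : ℂ) - (((N:ℝ)^n : ℝ) : ℂ) * Fc)‖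
              = ‖((inner ℂ φ (A φ) : ℂ) - ((N:ℝ)^n : ℝ) * Fc)‖ := by norm_cast
            _ ≤ (N:ℝ)^n * (ε/4) + ε/8 * (N:ℝ)^n := key1
      _ = (N:ℝ)^n * (‖A‖ + 3*ε/8) := by ring
  have : ‖Fc‖ ≤ ‖A‖ + 3*ε/8 := le_of_mul_le_mul_left hbig hNn
  rw [hGx]
  exact this
end
end
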